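/- arXiv:1511.03658 — 3 statements merged into one kernel-verified Lean document; each statement's English description precedes it below -/
import Mathlib

section
/- Let H be a compact convex subset of ℝ² with nonempty interior and area 1, and let N ≥ 1. Then Q^{N+2}_H = ∫_{x₀ < x₁ < … < x_{N+1}} ⟨V_H(x₀), …, V_H(x_{N+1})⟩ · (N+2)! · ∏_{j=0}^{N+1} W_H(x_j) dx₀ … dx_{N+1}, where the integral is over the set of strictly increasing (N+2)-tuples of reals. -/
open MeasureTheory ProbabilityTheory

noncomputable section

/-- A finite family of points of the plane is in convex position if no point of the family
lies in the convex hull of the other ones. -/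
def ConvexPos {ι : Type*} (z : ι → ℝ × ℝ) : Prop :=
  ∀ i : ι, z i ∉ convexHull ℝ (z '' {j | j ≠ i})

/-- `Qⁿ_H` : the probability that `n` i.i.d. points, each uniform on `H`, are in convex
position. -/
def convexProb (n : ℕ) (H : Set (ℝ × ℝ)) : ℝ :=
  ((Measure.pi fun _ : Fin n => ProbabilityTheory.cond volume H) {z | ConvexPos z}).toReal

/-- The uniform distribution on the segment with endpoints `a` and `b`
(a Dirac mass if `a = b`). -/
def segMeasure (a b : ℝ × ℝ) : Measure (ℝ × ℝ) :=
  Measure.map (fun t : ℝ => a + t • (b - a)) (ProbabilityTheory.cond volume (Set.Icc 0 1))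

/-- `⟨S₀, …⟩` : the probability that independent random points, the `j`-th one uniform on
the segment with endpoints `a j` and `b j`, are in convex position. -/
def segConvexProb {ι : Type*} [Fintype ι] (a b : ι → ℝ × ℝ) : ℝ :=
  ((Measure.pi fun j : ι => segMeasure (a j) (b j)) {z | ConvexPos z}).toReal

/-- `W_H x` : the length of the vertical slice of `H` at abscissa `x`. -/
def W (H : Set (ℝ × ℝ)) (x : ℝ) : ℝ := (volume {y : ℝ | (x, y) ∈ H}).toReal

/-- Bottom ordinate of the vertical slice of `H` at abscissa `x`. -/
def yLo (H : Set (ℝ × ℝ)) (x : ℝ) : ℝ := sInf {y : ℝ | (x, y) ∈ H}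

/-- Top ordinate of the vertical slice of `H` at abscissa `x`. -/
def yHi (H : Set (ℝ × ℝ)) (x : ℝ) : ℝ := sSup {y : ℝ | (x, y) ∈ H}

open Set ENNReal

variable {ι : Type*} [Fintype ι] [DecidableEq ι]

lemma mem_hull_iff (z : ι → ℝ × ℝ) (i : ι) :
    z i ∈ convexHull ℝ (z '' {j | j ≠ i}) ↔
      ∃ w ∈ stdSimplex ℝ {j : ι // j ≠ i}, ∑ j : {j : ι // j ≠ i}, w j • z ↑j = z i := by
  constructor
  · intro h
    rw [Set.image_eq_range] at h
    rw [convexHull_range_eq_exists_affineCombination] at h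
    obtain ⟨s, w, h0, h1, heq⟩ := h
    classical
    refine ⟨fun j => if j ∈ s then w j else 0, ⟨fun j => ?_, ?_⟩, ?_⟩
    · dsimp only
      split_ifs with hj
      · exact h0 j hj
      · exact le_refl 0
    · simpa using h1
    · rw [Finset.affineCombination_eq_linear_combination s _ w h1] at heq
      rw [← heq]
      simp [ite_smul]
      rfl
  · rintro ⟨w, ⟨hw0, hw1⟩, heq⟩
    exact mem_convexHull_of_exists_fintype w (fun j : {j : ι // j ≠ i} => z ↑j) hw0 hw1
      (fun j => ⟨j, j.2, rfl⟩) heq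

lemma isClosed_bad (i : ι) :
    IsClosed {z : ι → ℝ × ℝ | z i ∈ convexHull ℝ (z '' {j | j ≠ i})} := by
  haveI : CompactSpace (stdSimplex ℝ {j : ι // j ≠ i}) :=
    isCompact_iff_compactSpace.mp (isCompact_stdSimplex _ _)
  have hC : IsClosed {p : (ι → ℝ × ℝ) × (stdSimplex ℝ {j : ι // j ≠ i}) |
      ∑ j : {j : ι // j ≠ i}, (p.2 : {j : ι // j ≠ i} → ℝ) j • p.1 ↑j = p.1 i} := by
    apply isClosed_eq
    · apply continuous_finset_sum
      intro j _
      exact ((continuous_apply (j : {j : ι // j ≠ i})).comp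
        (continuous_subtype_val.comp continuous_snd)).smul
        ((continuous_apply (j : ι)).comp continuous_fst)
    · exact (continuous_apply i).comp continuous_fst
  have himg : {z : ι → ℝ × ℝ | z i ∈ convexHull ℝ (z '' {j | j ≠ i})} =
      Prod.fst '' {p : (ι → ℝ × ℝ) × (stdSimplex ℝ {j : ι // j ≠ i}) |
      ∑ j : {j : ι // j ≠ i}, (p.2 : {j : ι // j ≠ i} → ℝ) j • p.1 ↑j = p.1 i} := by
    ext z
    simp only [Set.mem_setOf_eq, Set.mem_image, Prod.exists, mem_hull_iff]
    constructor
    · rintro ⟨w, hw, heq⟩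
      exact ⟨z, ⟨w, hw⟩, heq, rfl⟩
    · rintro ⟨z', w, hw, rfl⟩
      exact ⟨w.1, w.2, hw⟩
  rw [himg]
  exact isClosedMap_fst_of_compactSpace _ hC

lemma isOpen_convexPos : IsOpen {z : ι → ℝ × ℝ | ConvexPos z} := by
  have : {z : ι → ℝ × ℝ | ConvexPos z}ᶜ =
      ⋃ i : ι, {z : ι → ℝ × ℝ | z i ∈ convexHull ℝ (z '' {j | j ≠ i})} := by
    ext z
    simp [ConvexPos]
  rw [← isClosed_compl_iff, this]
  exact isClosed_iUnion_of_finite fun i => isClosed_bad i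

lemma measurableSet_convexPos : MeasurableSet {z : ι → ℝ × ℝ | ConvexPos z} :=
  isOpen_convexPos.measurableSet

lemma convexPos_comp_iff (σ : Equiv.Perm ι) (z : ι → ℝ × ℝ) :
    ConvexPos (z ∘ σ) ↔ ConvexPos z := by
  have key : ∀ (τ : Equiv.Perm ι) (y : ι → ℝ × ℝ), ConvexPos y → ConvexPos (y ∘ τ) := by
    intro τ y hy i
    have hset : ⇑τ '' {j | j ≠ i} = {k | k ≠ τ i} := by
      ext k
      simp only [Set.mem_image, Set.mem_setOf_eq]
      constructor
      · rintro ⟨j, hj, rfl⟩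
        exact fun h => hj (τ.injective h)
      · intro hk
        exact ⟨τ.symm k, fun h => hk (by rw [← h]; simp), by simp⟩
    have himg : (y ∘ ⇑τ) '' {j | j ≠ i} = y '' {k | k ≠ τ i} := by
      rw [Set.image_comp, hset]
    show y (τ i) ∉ _
    rw [himg]
    exact hy (τ i)
  constructor
  · intro h
    have := key σ.symm _ h
    simpa [Function.comp_assoc] using this
  · exact key σ z
noncomputable section


variable {H : Set (ℝ × ℝ)}

lemma isCompact_slice (hcomp : IsCompact H) (x : ℝ) : IsCompact {y : ℝ | (x, y) ∈ H} := by
  have hcl : IsClosed {y : ℝ | (x, y) ∈ H} :=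
    hcomp.isClosed.preimage (Continuous.prodMk_right x)
  refine (hcomp.image continuous_snd).of_isClosed_subset hcl ?_
  intro y hy
  exact ⟨(x, y), hy, rfl⟩

lemma volume_slice_ne_top (hcomp : IsCompact H) (x : ℝ) :
    volume {y : ℝ | (x, y) ∈ H} ≠ ⊤ :=
  (isCompact_slice hcomp x).measure_lt_top.ne

lemma ofReal_W (hcomp : IsCompact H) (x : ℝ) :
    ENNReal.ofReal (W H x) = volume {y : ℝ | (x, y) ∈ H} :=
  ofReal_toReal (volume_slice_ne_top hcomp x)

lemma convex_slice (hconv : Convex ℝ H) (x : ℝ) : Convex ℝ {y : ℝ | (x, y) ∈ H} := by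
  intro y₁ h₁ y₂ h₂ a b ha hb hab
  have h := hconv h₁ h₂ ha hb hab
  have : a • ((x : ℝ), y₁) + b • (x, y₂) = (x, a • y₁ + b • y₂) := by
    simp only [Prod.smul_mk, Prod.mk_add_mk, smul_eq_mul, Prod.mk.injEq]
    refine ⟨by rw [← add_mul, hab, one_mul], trivial⟩
  rwa [this] at h

lemma slice_eq_Icc (hcomp : IsCompact H) (hconv : Convex ℝ H) {x : ℝ}
    (hne : {y : ℝ | (x, y) ∈ H}.Nonempty) :
    {y : ℝ | (x, y) ∈ H} = Icc (yLo H x) (yHi H x) := by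
  have hc := isCompact_slice hcomp x
  have hlo : yLo H x ∈ {y : ℝ | (x, y) ∈ H} := hc.sInf_mem hne
  have hhi : yHi H x ∈ {y : ℝ | (x, y) ∈ H} := hc.sSup_mem hne
  apply Subset.antisymm
  · intro y hy
    exact ⟨csInf_le hc.bddBelow hy, le_csSup hc.bddAbove hy⟩
  · exact ((convex_slice hconv x).ordConnected).out hlo hhi

lemma yLo_le_yHi (hcomp : IsCompact H) (hconv : Convex ℝ H) {x : ℝ}
    (hne : {y : ℝ | (x, y) ∈ H}.Nonempty) : yLo H x ≤ yHi H x :=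
  csInf_le_csSup hne (isCompact_slice hcomp x).bddBelow (isCompact_slice hcomp x).bddAbove

lemma W_eq (hcomp : IsCompact H) (hconv : Convex ℝ H) {x : ℝ}
    (hne : {y : ℝ | (x, y) ∈ H}.Nonempty) : W H x = yHi H x - yLo H x := by
  rw [W, slice_eq_Icc hcomp hconv hne, Real.volume_Icc,
    toReal_ofReal (sub_nonneg.2 (yLo_le_yHi hcomp hconv hne))]

lemma yLo_lt_yHi (hcomp : IsCompact H) (hconv : Convex ℝ H) {x : ℝ}
    (hpos : volume {y : ℝ | (x, y) ∈ H} ≠ 0) : yLo H x < yHi H x := by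
  have hne : {y : ℝ | (x, y) ∈ H}.Nonempty := by
    by_contra h
    rw [not_nonempty_iff_eq_empty] at h
    simp [h] at hpos
  have := yLo_le_yHi hcomp hconv hne
  rcases this.lt_or_eq with h | h
  · exact h
  · exfalso
    apply hpos
    rw [slice_eq_Icc hcomp hconv hne, h, Real.volume_Icc]
    simp

/-- The uniform measure on `Icc lo hi` is the affine image of the uniform on `Icc 0 1`. -/
lemma cond_Icc_eq_map {lo hi : ℝ} (h : lo < hi) :
    ProbabilityTheory.cond volume (Icc lo hi) =
      Measure.map (fun t : ℝ => lo + t * (hi - lo))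
        (ProbabilityTheory.cond volume (Icc (0:ℝ) 1)) := by
  set c := hi - lo with hc
  have hcpos : 0 < c := sub_pos.2 h
  have h01 : ProbabilityTheory.cond volume (Icc (0:ℝ) 1) = volume.restrict (Icc (0:ℝ) 1) := by
    rw [ProbabilityTheory.cond, Real.volume_Icc]
    norm_num
  have hpre : Icc (0:ℝ) 1 = (fun t : ℝ => lo + t * c) ⁻¹' (Icc lo hi) := by
    ext t
    simp only [mem_Icc, mem_preimage]
    constructor
    · rintro ⟨h0, h1⟩
      constructor
      · nlinarith
      · nlinarith
    · rintro ⟨h0, h1⟩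
      constructor
      · nlinarith
      · nlinarith
  have hmeas : Measurable fun t : ℝ => lo + t * c := by fun_prop
  rw [h01, hpre, ← Measure.restrict_map hmeas measurableSet_Icc]
  have hmap : Measure.map (fun t : ℝ => lo + t * c) volume
      = ENNReal.ofReal c⁻¹ • volume := by
    have : (fun t : ℝ => lo + t * c) = (fun t : ℝ => lo + t) ∘ (fun t : ℝ => c * t) := by
      funext t; simp [mul_comm]
    rw [this, ← Measure.map_map (by fun_prop) (by fun_prop),
      Real.map_volume_mul_left hcpos.ne', Measure.map_smul]
    congr 1
    · rw [abs_of_pos (inv_pos.2 hcpos)]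
    · exact (measurePreserving_add_left volume lo).map_eq
  rw [hmap, Measure.restrict_smul, ProbabilityTheory.cond, Real.volume_Icc, ← hc,
    ENNReal.ofReal_inv_of_pos hcpos]

lemma segMeasure_eq_map {x lo hi : ℝ} (h : lo < hi) :
    Measure.map (fun t : ℝ => ((x:ℝ), lo) + t • (((x:ℝ), hi) - (x, lo)))
        (ProbabilityTheory.cond volume (Icc (0:ℝ) 1)) =
      Measure.map (fun y : ℝ => ((x:ℝ), y)) (ProbabilityTheory.cond volume (Icc lo hi)) := by
  rw [cond_Icc_eq_map h, Measure.map_map (by fun_prop) (by fun_prop)]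
  congr 1
  funext t
  simp only [Function.comp_apply, Prod.mk_sub_mk, Prod.smul_mk, Prod.mk_add_mk, smul_eq_mul,
    Prod.mk.injEq]
  constructor
  · ring
  · trivial

/-- `Measure.pi` of restrictions is the restriction of `Measure.pi`. -/
lemma pi_restrict {ι : Type*} [Fintype ι] {α : ι → Type*} [∀ i, MeasurableSpace (α i)]
    (μ : ∀ i, Measure (α i)) [∀ i, SigmaFinite (μ i)] (s : ∀ i, Set (α i))
    (hs : ∀ i, MeasurableSet (s i)) :
    Measure.pi (fun i => (μ i).restrict (s i)) = (Measure.pi μ).restrict (Set.pi univ s) := by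
  apply Measure.pi_eq
  intro t ht
  rw [Measure.restrict_apply (MeasurableSet.univ_pi ht), ← Set.pi_inter_distrib,
    Measure.pi_pi]
  exact Finset.prod_congr rfl fun i _ => (Measure.restrict_apply (ht i)).symm

/-- `Measure.pi` of finite scalar multiples of finite measures. -/
lemma pi_smul {ι : Type*} [Fintype ι] {α : ι → Type*} [∀ i, MeasurableSpace (α i)]
    (c : ι → ℝ≥0∞) (μ : ∀ i, Measure (α i)) [∀ i, IsFiniteMeasure (μ i)]
    (hc : ∀ i, c i ≠ ⊤) :
    Measure.pi (fun i => c i • μ i) = (∏ i, c i) • Measure.pi μ := by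
  haveI : ∀ i, IsFiniteMeasure (c i • μ i) := fun i => by
    constructor
    rw [Measure.smul_apply, smul_eq_mul]
    exact ENNReal.mul_lt_top (lt_top_iff_ne_top.2 (hc i)) (measure_lt_top _ _)
  apply Measure.pi_eq
  intro t ht
  rw [Measure.smul_apply, smul_eq_mul, Measure.pi_pi, ← Finset.prod_mul_distrib]
  exact Finset.prod_congr rfl fun i _ => rfl
lemma cond_isProb {α : Type*} [MeasurableSpace α] {μ : Measure α} {s : Set α}
    (h0 : μ s ≠ 0) (htop : μ s ≠ ⊤) : IsProbabilityMeasure (ProbabilityTheory.cond μ s) := by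
  constructor
  rw [ProbabilityTheory.cond, Measure.smul_apply, Measure.restrict_apply_univ, smul_eq_mul,
    ENNReal.inv_mul_cancel h0 htop]

lemma cond_Icc01_isProb : IsProbabilityMeasure (ProbabilityTheory.cond volume (Icc (0:ℝ) 1)) := by
  apply cond_isProb <;> rw [Real.volume_Icc] <;> norm_num

instance segMeasure_isProb (a b : ℝ × ℝ) : IsProbabilityMeasure (segMeasure a b) := by
  haveI := cond_Icc01_isProb
  exact Measure.isProbabilityMeasure_map (by fun_prop)

variable {ι : Type*} [Fintype ι] [DecidableEq ι]

/-- The set of pairs (abscissas, ordinates) giving points of `H` in convex position. -/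
def Sset (H : Set (ℝ × ℝ)) (ι : Type*) : Set ((ι → ℝ) × (ι → ℝ)) :=
  {p | ConvexPos (fun j => (p.1 j, p.2 j)) ∧ ∀ j, (p.1 j, p.2 j) ∈ H}

lemma measurable_pair (x : ι → ℝ) : Measurable (fun (y : ι → ℝ) (j : ι) => (x j, y j)) :=
  measurable_pi_lambda _ fun j => measurable_const.prodMk (measurable_pi_apply j)

lemma measurableSet_Sset (hcomp : IsCompact H) : MeasurableSet (Sset H ι) := by
  have hsplit : Sset H ι = {p : (ι → ℝ) × (ι → ℝ) | ConvexPos (fun j => (p.1 j, p.2 j))}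
      ∩ {p : (ι → ℝ) × (ι → ℝ) | ∀ j, (p.1 j, p.2 j) ∈ H} := rfl
  rw [hsplit]
  apply MeasurableSet.inter
  · have hΦ : Measurable (fun (p : (ι → ℝ) × (ι → ℝ)) (j : ι) => (p.1 j, p.2 j)) :=
      measurable_pi_lambda _ fun j =>
        ((measurable_pi_apply j).comp measurable_fst).prodMk
          ((measurable_pi_apply j).comp measurable_snd)
    exact hΦ measurableSet_convexPos
  · rw [show {p : (ι → ℝ) × (ι → ℝ) | ∀ j, (p.1 j, p.2 j) ∈ H}
        = ⋂ j, {p : (ι → ℝ) × (ι → ℝ) | (p.1 j, p.2 j) ∈ H} by ext p; simp]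
    refine MeasurableSet.iInter fun j => ?_
    exact (((measurable_pi_apply j).comp measurable_fst).prodMk
      ((measurable_pi_apply j).comp measurable_snd)) hcomp.isClosed.measurableSet

/-- The section measure of `Sset` equals the convex-position probability for vertical
segments times the product of the widths. -/
lemma section_measure_eq (hcomp : IsCompact H) (hconv : Convex ℝ H) (x : ι → ℝ) :
    (Measure.pi fun _ : ι => (volume : Measure ℝ)) (Prod.mk x ⁻¹' Sset H ι)
      = ENNReal.ofReal (segConvexProb (fun j => (x j, yLo H (x j)))
          (fun j => (x j, yHi H (x j)))) * ∏ j, ENNReal.ofReal (W H (x j)) := by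
  have hslice_m : ∀ r : ℝ, MeasurableSet {y : ℝ | (r, y) ∈ H} := fun r =>
    (hcomp.isClosed.preimage (Continuous.prodMk_right r)).measurableSet
  set A : Set (ι → ℝ) := {y | ConvexPos (fun j => (x j, y j))} with hA_def
  have hA : MeasurableSet A := measurable_pair x measurableSet_convexPos
  have hsect : Prod.mk x ⁻¹' Sset H ι = A ∩ Set.pi univ (fun j => {y | (x j, y) ∈ H}) := by
    ext y
    simp [Sset, Set.mem_pi, hA_def]
  rw [hsect, ← Measure.restrict_apply hA,
    ← pi_restrict (fun _ : ι => (volume : Measure ℝ)) _ (fun j => hslice_m (x j))]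
  by_cases hzero : ∀ j, volume {y : ℝ | (x j, y) ∈ H} ≠ 0
  · -- all slices have positive measure
    have hlt : ∀ j, yLo H (x j) < yHi H (x j) := fun j => yLo_lt_yHi hcomp hconv (hzero j)
    have hrw : ∀ j, (volume : Measure ℝ).restrict {y | (x j, y) ∈ H}
        = ENNReal.ofReal (W H (x j)) •
          ProbabilityTheory.cond volume (Icc (yLo H (x j)) (yHi H (x j))) := by
      intro j
      have hne : {y : ℝ | (x j, y) ∈ H}.Nonempty := nonempty_of_measure_ne_zero (hzero j)
      have hIcc := slice_eq_Icc hcomp hconv hne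
      have hof : ENNReal.ofReal (W H (x j)) = volume (Icc (yLo H (x j)) (yHi H (x j))) := by
        rw [ofReal_W hcomp, hIcc]
      rw [ProbabilityTheory.cond, smul_smul, hof, hIcc,
        ENNReal.mul_inv_cancel (by rw [← hIcc]; exact hzero j)
          (by rw [← hIcc]; exact volume_slice_ne_top hcomp (x j)), one_smul]
    haveI hprob : ∀ j, IsProbabilityMeasure
        (ProbabilityTheory.cond volume (Icc (yLo H (x j)) (yHi H (x j)))) := fun j => by
      apply cond_isProb
      · rw [Real.volume_Icc]
        exact (ENNReal.ofReal_pos.2 (sub_pos.2 (hlt j))).ne'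
      · rw [Real.volume_Icc]
        exact ofReal_ne_top
    have := pi_smul (fun j => ENNReal.ofReal (W H (x j)))
      (fun j => ProbabilityTheory.cond volume (Icc (yLo H (x j)) (yHi H (x j))))
      (fun j => ofReal_ne_top)
    calc (Measure.pi fun j : ι => (volume : Measure ℝ).restrict {y | (x j, y) ∈ H}) A
        = ((∏ j, ENNReal.ofReal (W H (x j))) • Measure.pi
            (fun j => ProbabilityTheory.cond volume
              (Icc (yLo H (x j)) (yHi H (x j))))) A := by
          rw [← this]
          congr 1
          exact congrArg Measure.pi (funext hrw)
      _ = (∏ j, ENNReal.ofReal (W H (x j))) * (Measure.pi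
            (fun j => ProbabilityTheory.cond volume
              (Icc (yLo H (x j)) (yHi H (x j))))) A := by
          rw [Measure.smul_apply, smul_eq_mul]
      _ = ENNReal.ofReal (segConvexProb (fun j => (x j, yLo H (x j)))
            (fun j => (x j, yHi H (x j)))) * ∏ j, ENNReal.ofReal (W H (x j)) := by
          rw [mul_comm]
          congr 1
          -- the pi of conditional measures pushed to vertical segments
          have hmp : MeasurePreserving (fun (y : ι → ℝ) (j : ι) => (x j, y j))
              (Measure.pi fun j => ProbabilityTheory.cond volume
                (Icc (yLo H (x j)) (yHi H (x j))))
              (Measure.pi fun j => segMeasure (x j, yLo H (x j)) (x j, yHi H (x j))) := by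
            apply measurePreserving_pi
            intro j
            refine ⟨measurable_const.prodMk measurable_id, ?_⟩
            rw [segMeasure, segMeasure_eq_map (hlt j)]
          have := hmp.measure_preimage
            (s := {z : ι → ℝ × ℝ | ConvexPos z}) measurableSet_convexPos.nullMeasurableSet
          rw [segConvexProb, ofReal_toReal (measure_ne_top _ _), ← this]
          rfl
  · -- some slice is null
    push_neg at hzero
    obtain ⟨j0, hj0⟩ := hzero
    have h1 : (Measure.pi fun j : ι => (volume : Measure ℝ).restrict {y | (x j, y) ∈ H}) A
        = 0 := by
      refine le_antisymm (le_trans (measure_mono (subset_univ _)) ?_) zero_le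
      rw [Measure.pi_univ]
      have h0 : ((volume : Measure ℝ).restrict {y | (x j0, y) ∈ H}) univ = 0 := by
        rw [Measure.restrict_apply_univ]; exact hj0
      rw [Finset.prod_eq_zero (Finset.mem_univ j0) h0]
    rw [h1]
    symm
    apply mul_eq_zero.2
    right
    apply Finset.prod_eq_zero (Finset.mem_univ j0)
    rw [ofReal_W hcomp]
    exact hj0

lemma main_identity (hcomp : IsCompact H) (hconv : Convex ℝ H) :
    (Measure.pi fun _ : ι => (volume : Measure (ℝ × ℝ)).restrict H) {z | ConvexPos z}
      = ∫⁻ x : ι → ℝ, ENNReal.ofReal (segConvexProb (fun j => (x j, yLo H (x j)))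
          (fun j => (x j, yHi H (x j)))) * ∏ j, ENNReal.ofReal (W H (x j)) := by
  have hHm : MeasurableSet H := hcomp.isClosed.measurableSet
  have hP : MeasurableSet {z : ι → ℝ × ℝ | ConvexPos z} := measurableSet_convexPos
  have hS : MeasurableSet (Sset H ι) := measurableSet_Sset hcomp
  set e := MeasurableEquiv.arrowProdEquivProdArrow ℝ ℝ ι with he
  have hTe : {z : ι → ℝ × ℝ | ConvexPos z} ∩ Set.pi univ (fun _ => H) = ⇑e ⁻¹' Sset H ι := by
    ext z
    have hz : (fun j => ((e z).1 j, (e z).2 j)) = z := by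
      funext j
      simp [he, MeasurableEquiv.arrowProdEquivProdArrow, Equiv.arrowProdEquivProdArrow]
    simp only [Set.mem_inter_iff, Set.mem_setOf_eq, Set.mem_pi, Set.mem_preimage, Sset,
      Set.mem_univ, forall_true_left, hz]
    tauto
  have mp := volume_measurePreserving_arrowProdEquivProdArrow ℝ ℝ ι
  calc (Measure.pi fun _ : ι => (volume : Measure (ℝ × ℝ)).restrict H) {z | ConvexPos z}
      = ((Measure.pi fun _ : ι => (volume : Measure (ℝ × ℝ))).restrict
          (Set.pi univ fun _ => H)) {z | ConvexPos z} := by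
        rw [pi_restrict (fun _ : ι => (volume : Measure (ℝ × ℝ))) _ (fun _ => hHm)]
    _ = (Measure.pi fun _ : ι => (volume : Measure (ℝ × ℝ)))
          ({z | ConvexPos z} ∩ Set.pi univ (fun _ => H)) := Measure.restrict_apply hP
    _ = (volume : Measure (ι → ℝ × ℝ)) (⇑e ⁻¹' Sset H ι) := by
        rw [hTe, MeasureTheory.volume_pi]
    _ = (volume : Measure ((ι → ℝ) × (ι → ℝ))) (Sset H ι) :=
        mp.measure_preimage hS.nullMeasurableSet
    _ = ∫⁻ x : ι → ℝ, (Measure.pi fun _ : ι => (volume : Measure ℝ))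
          (Prod.mk x ⁻¹' Sset H ι) ∂(volume : Measure (ι → ℝ)) := by
        rw [Measure.volume_eq_prod, Measure.prod_apply hS, MeasureTheory.volume_pi]
    _ = ∫⁻ x : ι → ℝ, ENNReal.ofReal (segConvexProb (fun j => (x j, yLo H (x j)))
          (fun j => (x j, yHi H (x j)))) * ∏ j, ENNReal.ofReal (W H (x j)) := by
        exact lintegral_congr fun x => section_measure_eq hcomp hconv x

lemma segConvexProb_comp (a b : ι → ℝ × ℝ) (σ : Equiv.Perm ι) :
    segConvexProb (a ∘ ⇑σ) (b ∘ ⇑σ) = segConvexProb a b := by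
  unfold segConvexProb
  congr 1
  have hmap := Measure.pi_map_piCongrLeft (β := fun _ : ι => ℝ × ℝ) σ
    (fun j : ι => segMeasure (a j) (b j))
  rw [← hmap, Measure.map_apply (MeasurableEquiv.measurable _) measurableSet_convexPos]
  congr 1
  ext z
  have hz : ⇑(MeasurableEquiv.piCongrLeft (fun _ : ι => ℝ × ℝ) σ) z = z ∘ ⇑σ.symm := by
    funext i
    have h := Equiv.piCongrLeft_apply_apply (fun _ : ι => ℝ × ℝ) σ z (σ.symm i)
    rw [Equiv.apply_symm_apply] at h
    exact h
  simp only [Set.mem_preimage, Set.mem_setOf_eq]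
  rw [show ⇑(MeasurableEquiv.piCongrLeft (fun _ : ι => ℝ × ℝ) σ) z = z ∘ ⇑σ.symm from hz]
  exact (convexPos_comp_iff σ.symm z).symm

lemma measurableSet_strictMono {n : ℕ} : MeasurableSet {x : Fin n → ℝ | StrictMono x} := by
  have h : {x : Fin n → ℝ | StrictMono x}
      = ⋂ i, ⋂ j, ⋂ (_ : i < j), {x : Fin n → ℝ | x i < x j} := by
    ext x
    simp only [Set.mem_setOf_eq, Set.mem_iInter]
    exact ⟨fun h i j hij => h hij, fun h a b hab => h a b hab⟩
  rw [h]
  exact MeasurableSet.iInter fun i => MeasurableSet.iInter fun j =>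
    MeasurableSet.iInter fun _ => measurableSet_lt (measurable_pi_apply i) (measurable_pi_apply j)

lemma hyperplane_null {κ : Type*} [Fintype κ] [DecidableEq κ] {i j : κ} (hij : i ≠ j) :
    (Measure.pi fun _ : κ => (volume : Measure ℝ)) {x : κ → ℝ | x i = x j} = 0 := by
  classical
  set p : κ → Prop := fun k => k ≠ i with hp
  have mp3 := measurePreserving_piEquivPiSubtypeProd (fun _ : κ => (volume : Measure ℝ)) p
  set B : Set (({k // p k} → ℝ) × ({k // ¬ p k} → ℝ)) :=
    {q | q.2 ⟨i, by simp [hp]⟩ = q.1 ⟨j, hij.symm⟩} with hB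
  have hBmeas : MeasurableSet B := by
    apply measurableSet_eq_fun
    · exact (measurable_pi_apply _).comp measurable_snd
    · exact (measurable_pi_apply _).comp measurable_fst
  have hpre : {x : κ → ℝ | x i = x j} =
      ⇑(MeasurableEquiv.piEquivPiSubtypeProd (fun _ : κ => ℝ) p) ⁻¹' B := by
    ext x
    simp only [Set.mem_setOf_eq, Set.mem_preimage, hB, MeasurableEquiv.piEquivPiSubtypeProd,
      Equiv.piEquivPiSubtypeProd, MeasurableEquiv.coe_mk, Equiv.coe_fn_mk]
  rw [hpre, mp3.measure_preimage hBmeas.nullMeasurableSet, Measure.prod_apply hBmeas]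
  have hz : ∀ u : {k // p k} → ℝ,
      (Measure.pi fun _ : {k // ¬ p k} => (volume : Measure ℝ)) (Prod.mk u ⁻¹' B) = 0 := by
    intro u
    have : Prod.mk u ⁻¹' B = {v : {k // ¬ p k} → ℝ | v ⟨i, by simp [hp]⟩ = u ⟨j, hij.symm⟩} :=
      rfl
    rw [this]
    exact Measure.pi_hyperplane _ _ _
  simp [hz]

lemma notInj_null {n : ℕ} :
    (volume : Measure (Fin n → ℝ)) {x : Fin n → ℝ | ¬ Function.Injective x} = 0 := by
  have hsub : {x : Fin n → ℝ | ¬ Function.Injective x} ⊆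
      ⋃ (p : Fin n × Fin n), ⋃ (_ : p.1 ≠ p.2), {x : Fin n → ℝ | x p.1 = x p.2} := by
    intro x hx
    simp only [Set.mem_setOf_eq, Function.Injective, not_forall] at hx
    obtain ⟨a, b, hab, hne⟩ := hx
    exact Set.mem_iUnion.2 ⟨(a, b), Set.mem_iUnion.2 ⟨hne, hab⟩⟩
  refine measure_mono_null hsub (measure_iUnion_null fun p => measure_iUnion_null fun h => ?_)
  rw [MeasureTheory.volume_pi]
  exact hyperplane_null h

lemma symmetrization {n : ℕ} (G : (Fin n → ℝ) → ℝ≥0∞) (hG : Measurable G)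
    (hsym : ∀ (σ : Equiv.Perm (Fin n)) (x : Fin n → ℝ), G (x ∘ ⇑σ) = G x) :
    ∫⁻ x, G x = (n.factorial : ℝ≥0∞) * ∫⁻ x in {x : Fin n → ℝ | StrictMono x}, G x := by
  have hcm : ∀ σ : Equiv.Perm (Fin n), Measurable (fun x : Fin n → ℝ => x ∘ ⇑σ) := fun σ =>
    measurable_pi_lambda _ fun i => measurable_pi_apply (σ i)
  have hAm : ∀ σ : Equiv.Perm (Fin n), MeasurableSet {x : Fin n → ℝ | StrictMono (x ∘ ⇑σ)} :=
    fun σ => (hcm σ) measurableSet_strictMono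
  have hdisj : Pairwise (Function.onFun Disjoint fun σ : Equiv.Perm (Fin n) =>
      {x : Fin n → ℝ | StrictMono (x ∘ ⇑σ)}) := by
    intro σ τ hst
    rw [Function.onFun, Set.disjoint_left]
    intro x hxσ hxτ
    apply hst
    have hσ : StrictMono (x ∘ ⇑σ) := hxσ
    have hτ : StrictMono (x ∘ ⇑τ) := hxτ
    have hh : StrictMono ⇑(τ.trans σ.symm) := by
      intro c d hcd
      have h1 : x (τ c) < x (τ d) := hτ hcd
      have h2 : (x ∘ ⇑σ) (σ.symm (τ c)) < (x ∘ ⇑σ) (σ.symm (τ d)) := by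
        simpa using h1
      exact hσ.lt_iff_lt.mp h2
    have hid : ⇑(τ.trans σ.symm) = id := by
      apply (hh.range_inj strictMono_id).mp
      rw [(τ.trans σ.symm).surjective.range_eq, Set.range_id]
    apply Equiv.ext
    intro k
    have := congrFun hid k
    simp only [Equiv.coe_trans, Function.comp_apply, id_eq] at this
    calc σ k = σ (σ.symm (τ k)) := by rw [this]
      _ = τ k := σ.apply_symm_apply _
  have hcover : {x : Fin n → ℝ | Function.Injective x} ⊆
      ⋃ σ : Equiv.Perm (Fin n), {x : Fin n → ℝ | StrictMono (x ∘ ⇑σ)} := by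
    intro x hx
    exact Set.mem_iUnion.2 ⟨Tuple.sort x,
      (Tuple.monotone_sort x).strictMono_of_injective (hx.comp (Tuple.sort x).injective)⟩
  have hUc : (volume : Measure (Fin n → ℝ))
      (⋃ σ : Equiv.Perm (Fin n), {x : Fin n → ℝ | StrictMono (x ∘ ⇑σ)})ᶜ = 0 := by
    refine measure_mono_null ?_ notInj_null
    intro x hx
    simp only [Set.mem_compl_iff] at hx
    intro hinj
    exact hx (hcover hinj)
  have hsingle : ∀ σ : Equiv.Perm (Fin n),
      ∫⁻ x in {x : Fin n → ℝ | StrictMono (x ∘ ⇑σ)}, G x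
        = ∫⁻ x in {x : Fin n → ℝ | StrictMono x}, G x := by
    intro σ
    have mpσ : MeasurePreserving (fun x : Fin n → ℝ => x ∘ ⇑σ) volume volume := by
      have h1 := MeasureTheory.volume_measurePreserving_piCongrLeft (fun _ : Fin n => ℝ) σ.symm
      have h2 : ⇑(MeasurableEquiv.piCongrLeft (fun _ : Fin n => ℝ) σ.symm)
          = fun x : Fin n → ℝ => x ∘ ⇑σ := by
        funext x
        funext i
        have h := Equiv.piCongrLeft_apply_apply (fun _ : Fin n => ℝ) σ.symm x (σ i)
        rw [Equiv.symm_apply_apply] at h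
        exact h
      rwa [h2] at h1
    have hind : Measurable (Set.indicator {x : Fin n → ℝ | StrictMono x} G) :=
      hG.indicator measurableSet_strictMono
    have hkey := mpσ.lintegral_comp hind
    have hpt : ∀ x : Fin n → ℝ,
        Set.indicator {x : Fin n → ℝ | StrictMono x} G (x ∘ ⇑σ)
          = Set.indicator {x : Fin n → ℝ | StrictMono (x ∘ ⇑σ)} G x := by
      intro x
      simp only [Set.indicator_apply, Set.mem_setOf_eq]
      by_cases hx : StrictMono (x ∘ ⇑σ)
      · simp [hx, hsym σ x]
      · simp [hx]
    calc ∫⁻ x in {x : Fin n → ℝ | StrictMono (x ∘ ⇑σ)}, G x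
        = ∫⁻ x, Set.indicator {x : Fin n → ℝ | StrictMono (x ∘ ⇑σ)} G x := by
          rw [lintegral_indicator (hAm σ)]
      _ = ∫⁻ x, Set.indicator {x : Fin n → ℝ | StrictMono x} G (x ∘ ⇑σ) := by
          exact lintegral_congr fun x => (hpt x).symm
      _ = ∫⁻ x, Set.indicator {x : Fin n → ℝ | StrictMono x} G x := hkey
      _ = ∫⁻ x in {x : Fin n → ℝ | StrictMono x}, G x := by
          rw [lintegral_indicator measurableSet_strictMono]
  calc ∫⁻ x, G x = ∫⁻ x in Set.univ, G x := (setLIntegral_univ G).symm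
    _ = ∫⁻ x in ⋃ σ : Equiv.Perm (Fin n), {x : Fin n → ℝ | StrictMono (x ∘ ⇑σ)}, G x := by
        rw [Measure.restrict_congr_set (ae_eq_univ.2 hUc)]
    _ = ∑' σ : Equiv.Perm (Fin n), ∫⁻ x in {x : Fin n → ℝ | StrictMono (x ∘ ⇑σ)}, G x :=
        lintegral_iUnion hAm hdisj G
    _ = ∑ σ : Equiv.Perm (Fin n), ∫⁻ x in {x : Fin n → ℝ | StrictMono (x ∘ ⇑σ)}, G x :=
        tsum_fintype _
    _ = ∑ _σ : Equiv.Perm (Fin n), ∫⁻ x in {x : Fin n → ℝ | StrictMono x}, G x :=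
        Finset.sum_congr rfl fun σ _ => hsingle σ
    _ = (n.factorial : ℝ≥0∞) * ∫⁻ x in {x : Fin n → ℝ | StrictMono x}, G x := by
        rw [Finset.sum_const, Finset.card_univ, Fintype.card_perm, Fintype.card_fin,
          nsmul_eq_mul]

/-- Disintegration of `Q^{N+2}_H` over the (sorted) abscissas of the random points:
`Q^{N+2}_H = ∫_{x₀<…<x_{N+1}} ⟨V_H(x₀),…,V_H(x_{N+1})⟩ (N+2)! ∏ⱼ W_H(xⱼ) dx`.
Here `V_H(x)` is the vertical segment of `H` at abscissa `x`, with endpoints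
`(x, yLo H x)` and `(x, yHi H x)`. -/
theorem convexProb_eq_integral_segConvexProb (H : Set (ℝ × ℝ))
    (hcomp : IsCompact H) (hconv : Convex ℝ H) (hint : (interior H).Nonempty)
    (harea : volume H = 1) (N : ℕ) (hN : 1 ≤ N) :
    convexProb (N + 2) H =
      ∫ x in {x : Fin (N + 2) → ℝ | StrictMono x},
        segConvexProb (fun j => (x j, yLo H (x j))) (fun j => (x j, yHi H (x j))) *
          (Nat.factorial (N + 2) : ℝ) * ∏ j : Fin (N + 2), W H (x j) := by
  classical
  set G : (Fin (N + 2) → ℝ) → ℝ≥0∞ := fun x =>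
    ENNReal.ofReal (segConvexProb (fun j => (x j, yLo H (x j)))
      (fun j => (x j, yHi H (x j)))) * ∏ j, ENNReal.ofReal (W H (x j)) with hGdef
  have hGs : ∀ x, G x = (Measure.pi fun _ : Fin (N + 2) => (volume : Measure ℝ))
      (Prod.mk x ⁻¹' Sset H (Fin (N + 2))) := fun x => (section_measure_eq hcomp hconv x).symm
  have hGmeas : Measurable G := by
    rw [show G = fun x => (Measure.pi fun _ : Fin (N + 2) => (volume : Measure ℝ))
        (Prod.mk x ⁻¹' Sset H (Fin (N + 2))) from funext hGs]
    exact measurable_measure_prodMk_left (measurableSet_Sset hcomp)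
  have hGsym : ∀ (σ : Equiv.Perm (Fin (N + 2))) (x : Fin (N + 2) → ℝ), G (x ∘ ⇑σ) = G x := by
    intro σ x
    rw [hGdef]
    dsimp only
    congr 1
    · exact congrArg ENNReal.ofReal (segConvexProb_comp
        (fun j => (x j, yLo H (x j))) (fun j => (x j, yHi H (x j))) σ)
    · exact Equiv.prod_comp σ (fun j => ENNReal.ofReal (W H (x j)))
  have hcond : ProbabilityTheory.cond volume H = (volume : Measure (ℝ × ℝ)).restrict H := by
    rw [ProbabilityTheory.cond, harea, inv_one, one_smul]
  haveI hμprob : IsProbabilityMeasure ((volume : Measure (ℝ × ℝ)).restrict H) :=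
    ⟨by rw [Measure.restrict_apply_univ]; exact harea⟩
  have hmain : (Measure.pi fun _ : Fin (N + 2) => (volume : Measure (ℝ × ℝ)).restrict H)
      {z | ConvexPos z} = ∫⁻ x, G x := main_identity hcomp hconv
  have hsymEq : ∫⁻ x, G x = ((N + 2).factorial : ℝ≥0∞) *
      ∫⁻ x in {x : Fin (N + 2) → ℝ | StrictMono x}, G x := symmetrization G hGmeas hGsym
  have hGlt : ∀ x, G x < ⊤ := by
    intro x
    rw [hGdef]
    dsimp only
    exact ENNReal.mul_lt_top ofReal_lt_top
      (ENNReal.prod_lt_top fun j _ => ofReal_lt_top)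
  have hInt : ∫⁻ x in {x : Fin (N + 2) → ℝ | StrictMono x}, G x ≠ ⊤ := by
    refine ne_top_of_le_ne_top ?_ (setLIntegral_le_lintegral _ _)
    rw [← hmain]
    exact (prob_le_one.trans_lt one_lt_top).ne
  have hFnn : ∀ x : Fin (N + 2) → ℝ, 0 ≤ segConvexProb (fun j => (x j, yLo H (x j)))
      (fun j => (x j, yHi H (x j))) := fun x => ENNReal.toReal_nonneg
  have hWnn : ∀ r : ℝ, 0 ≤ W H r := fun r => ENNReal.toReal_nonneg
  have hpt : ∀ x : Fin (N + 2) → ℝ,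
      segConvexProb (fun j => (x j, yLo H (x j))) (fun j => (x j, yHi H (x j))) *
        (Nat.factorial (N + 2) : ℝ) * ∏ j : Fin (N + 2), W H (x j)
      = (Nat.factorial (N + 2) : ℝ) * (G x).toReal := by
    intro x
    rw [hGdef]
    dsimp only
    rw [ENNReal.toReal_mul, ENNReal.toReal_ofReal (hFnn x), ENNReal.toReal_prod]
    simp_rw [ENNReal.toReal_ofReal (hWnn _)]
    ring
  calc convexProb (N + 2) H
      = ((Measure.pi fun _ : Fin (N + 2) => (volume : Measure (ℝ × ℝ)).restrict H)
          {z | ConvexPos z}).toReal := by rw [convexProb, hcond]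
    _ = (((N + 2).factorial : ℝ≥0∞) *
          ∫⁻ x in {x : Fin (N + 2) → ℝ | StrictMono x}, G x).toReal := by
        rw [hmain, hsymEq]
    _ = ((N + 2).factorial : ℝ) *
          (∫⁻ x in {x : Fin (N + 2) → ℝ | StrictMono x}, G x).toReal := by
        rw [ENNReal.toReal_mul, ENNReal.toReal_natCast]
    _ = ((N + 2).factorial : ℝ) *
          ∫ x in {x : Fin (N + 2) → ℝ | StrictMono x}, (G x).toReal := by
        rw [integral_toReal hGmeas.aemeasurable (Filter.Eventually.of_forall fun x => hGlt x)]
    _ = ∫ x in {x : Fin (N + 2) → ℝ | StrictMono x},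
          ((N + 2).factorial : ℝ) * (G x).toReal := (integral_const_mul _ _).symm
    _ = ∫ x in {x : Fin (N + 2) → ℝ | StrictMono x},
          segConvexProb (fun j => (x j, yLo H (x j))) (fun j => (x j, yHi H (x j))) *
            (Nat.factorial (N + 2) : ℝ) * ∏ j : Fin (N + 2), W H (x j) :=
        integral_congr_ae (Filter.Eventually.of_forall fun x => (hpt x).symm)
end
end
end

section
/- Let N ≥ 1, let u₀, u_{N+1} ∈ ℝ, and let z_j = (x_j, y_j) for 1 ≤ j ≤ N be points with 0 < x₁ < … < x_N < 1. Set z₀ = (0, u₀), z_{N+1} = (1, u_{N+1}), and for 1 ≤ j ≤ N set u_j = u₀ + x_j(u_{N+1} − u₀); assume y_j ≠ u_j for all 1 ≤ j ≤ N, and let A = {j ∈ {1,…,N} : y_j > u_j}. Then the tuple (z₀, z₁, …, z_{N+1}) is in convex position if and only if both the tuple consisting of z₀, z_{N+1} and the points z_j with j ∈ A, and the tuple consisting of z₀, z_{N+1} and the points z_j with j ∉ A, are in convex position. -/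
noncomputable section

lemma geom_aux (u0 u1 s : ℝ) (hs : s ≠ 0) (S : Set (ℝ × ℝ))
    (hS : ∀ p ∈ S, 0 ≤ p.1 ∧ p.1 ≤ 1)
    (p : ℝ × ℝ) (hp : p ∈ convexHull ℝ S)
    (hfp : 0 ≤ s * (p.2 - (u0 + p.1 * (u1 - u0)))) :
    p ∈ convexHull ℝ ({q ∈ S | 0 < s * (q.2 - (u0 + q.1 * (u1 - u0)))} ∪ {(0, u0), (1, u1)}) := by
  set f : ℝ × ℝ → ℝ := fun q => s * (q.2 - (u0 + q.1 * (u1 - u0))) with hf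
  -- f is affine on convex combinations
  have key : ∀ (a b : ℝ) (q r : ℝ × ℝ), a + b = 1 →
      f (a • q + b • r) = a * f q + b * f r := by
    intro a b q r hab
    simp only [hf, Prod.fst_add, Prod.snd_add, Prod.smul_fst, Prod.smul_snd, smul_eq_mul]
    linear_combination (s * u0) * hab
  have keyx : ∀ (a b : ℝ) (q r : ℝ × ℝ), (a • q + b • r).1 = a * q.1 + b * r.1 := by
    intro a b q r
    simp [Prod.fst_add, Prod.smul_fst, smul_eq_mul]
  set Sp : Set (ℝ × ℝ) := {q ∈ S | 0 < f q} with hSp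
  set V : Set (ℝ × ℝ) := convexHull ℝ (Sp ∪ {(0, u0), (1, u1)}) with hV
  have hVconv : Convex ℝ V := convex_convexHull ℝ _
  -- points on the line with x ∈ [0,1] lie in V
  have hline : ∀ r : ℝ × ℝ, f r = 0 → 0 ≤ r.1 → r.1 ≤ 1 → r ∈ V := by
    intro r hr h0 h1
    have h0V : ((0 : ℝ), u0) ∈ V := subset_convexHull ℝ _ (Or.inr (by simp))
    have h1V : ((1 : ℝ), u1) ∈ V := subset_convexHull ℝ _ (Or.inr (by simp))
    have hr2 : r.2 = u0 + r.1 * (u1 - u0) := by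
      have := mul_eq_zero.1 hr
      rcases this with h | h
      · exact absurd h hs
      · linarith
    have : r = (1 - r.1) • ((0 : ℝ), u0) + r.1 • ((1 : ℝ), u1) := by
      ext
      · simp
      · simp only [Prod.snd_add, Prod.smul_snd, smul_eq_mul]
        rw [hr2]; ring
    rw [this]
    exact hVconv h0V h1V (by linarith) h0 (by ring)
  set D : Set (ℝ × ℝ) := {q | f q ≤ 0 ∧ 0 ≤ q.1 ∧ q.1 ≤ 1} with hD
  have hDconv : Convex ℝ D := by
    intro q hq r hr a b ha hb hab
    refine ⟨?_, ?_, ?_⟩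
    · rw [key a b q r hab]
      nlinarith [mul_nonneg ha (neg_nonneg.2 hq.1), mul_nonneg hb (neg_nonneg.2 hr.1)]
    · rw [keyx]; nlinarith [mul_nonneg ha hq.2.1, mul_nonneg hb hr.2.1]
    · rw [keyx]; nlinarith [mul_le_mul_of_nonneg_left hq.2.2 ha,
        mul_le_mul_of_nonneg_left hr.2.2 hb]
  have hDne : D.Nonempty := ⟨((0 : ℝ), u0), by constructor <;> simp [hf]⟩
  have hSD : S ⊆ Sp ∪ D := by
    intro q hq
    rcases lt_or_ge 0 (f q) with h | h
    · exact Or.inl ⟨hq, h⟩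
    · exact Or.inr ⟨h, (hS q hq).1, (hS q hq).2⟩
  have hp' : p ∈ convexHull ℝ (Sp ∪ D) := convexHull_mono hSD hp
  rcases Set.eq_empty_or_nonempty Sp with hSpe | hSpne
  · rw [hSpe, Set.empty_union, hDconv.convexHull_eq] at hp'
    have : f p = 0 := le_antisymm hp'.1 hfp
    exact hline p this hp'.2.1 hp'.2.2
  · rw [convexHull_union hSpne hDne, hDconv.convexHull_eq] at hp'
    rw [mem_convexJoin] at hp'
    obtain ⟨q, hq, r, hr, hseg⟩ := hp'
    obtain ⟨a, b, ha, hb, hab, hpe⟩ := hseg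
    -- facts about q
    have hqpos : 0 < f q := by
      have hconv : Convex ℝ {w : ℝ × ℝ | 0 < f w} := by
        intro q1 h1 q2 h2 a b ha hb hab
        rw [Set.mem_setOf_eq, key a b q1 q2 hab]
        rcases eq_or_lt_of_le ha with h | h
        · have hb1 : b = 1 := by linarith
          rw [← h, hb1]; simpa using h2
        · nlinarith [mul_pos h h1, mul_nonneg hb h2.le]
      exact convexHull_min (fun w hw => hw.2) hconv hq
    have hqx : 0 ≤ q.1 ∧ q.1 ≤ 1 := by
      have hconv : Convex ℝ {w : ℝ × ℝ | 0 ≤ w.1 ∧ w.1 ≤ 1} := by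
        intro q1 h1 q2 h2 a b ha hb hab
        constructor
        · rw [keyx]; nlinarith [mul_nonneg ha h1.1, mul_nonneg hb h2.1]
        · rw [keyx]; nlinarith [mul_le_mul_of_nonneg_left h1.2 ha,
            mul_le_mul_of_nonneg_left h2.2 hb]
      exact convexHull_min (fun w hw => hS w hw.1) hconv hq
    have hqV : q ∈ V := convexHull_mono Set.subset_union_left hq
    have hfpe : f p = a * f q + b * f r := by rw [← hpe, key a b q r hab]
    rcases eq_or_lt_of_le hr.1 with hfr | hfr
    · -- f r = 0 : r on the line
      have hrV : r ∈ V := hline r hfr hr.2.1 hr.2.2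
      rw [← hpe]; exact hVconv hqV hrV ha hb hab
    · -- f r < 0
      set τ : ℝ := f q / (f q - f r) with hτ
      have hden : 0 < f q - f r := by linarith
      have hτpos : 0 < τ := div_pos hqpos hden
      have hτle : τ ≤ 1 := by rw [div_le_one hden]; linarith
      set w : ℝ × ℝ := (1 - τ) • q + τ • r with hw
      have hfw : f w = 0 := by
        rw [hw, key (1 - τ) τ q r (by ring)]
        field_simp [hτ]
        have hτm : τ * (f q - f r) = f q := by rw [hτ]; exact div_mul_cancel₀ _ hden.ne'
        linear_combination -hτm
      have hwx1 : 0 ≤ w.1 := by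
        rw [hw, keyx]
        nlinarith [mul_nonneg (by linarith : (0:ℝ) ≤ 1 - τ) hqx.1,
          mul_nonneg hτpos.le hr.2.1]
      have hwx2 : w.1 ≤ 1 := by
        rw [hw, keyx]
        nlinarith [mul_le_mul_of_nonneg_left hqx.2 (by linarith : (0:ℝ) ≤ 1 - τ),
          mul_le_mul_of_nonneg_left hr.2.2 hτpos.le]
      have hwV : w ∈ V := hline w hfw hwx1 hwx2
      have hfp0 : 0 ≤ a * f q + b * f r := by rw [← hfpe]; exact hfp
      have hbτ : b ≤ τ := by
        rw [hτ, le_div_iff₀ hden]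
        have ha' : a = 1 - b := by linarith
        rw [ha'] at hfp0
        nlinarith [hfp0]
      set σ : ℝ := b / τ with hσ
      have hσ0 : 0 ≤ σ := div_nonneg hb hτpos.le
      have hσ1 : σ ≤ 1 := by rw [hσ, div_le_one hτpos]; exact hbτ
      have hστ : σ * τ = b := div_mul_cancel₀ b (ne_of_gt hτpos)
      have hpeq : p = (1 - σ) • q + σ • w := by
        rw [← hpe, hw]
        match_scalars
        · linear_combination hστ + hab
        · linear_combination -hστ
      rw [hpeq]
      exact hVconv hqV hwV (by linarith) hσ0 (by ring)


lemma img_sub (z : ℕ → ℝ × ℝ) (S : Finset ℕ) (i : ↥S) :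
    (fun j : ↥S => z ↑j) '' {j | j ≠ i} = z '' {k | k ∈ S ∧ k ≠ ↑i} := by
  ext p
  constructor
  · rintro ⟨⟨k, hk⟩, hne, rfl⟩
    exact ⟨k, ⟨hk, fun h => hne (by simpa [Subtype.ext_iff] using h)⟩, rfl⟩
  · rintro ⟨k, ⟨hk, hne⟩, rfl⟩
    exact ⟨⟨k, hk⟩, fun h => hne (by simpa [Subtype.ext_iff] using h), rfl⟩

lemma img_fin (z : ℕ → ℝ × ℝ) (N : ℕ) (i : Fin (N + 2)) :
    (fun j : Fin (N + 2) => z ↑j) '' {j | j ≠ i} = z '' {k | k ≤ N + 1 ∧ k ≠ ↑i} := by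
  ext p
  constructor
  · rintro ⟨j, hne, rfl⟩
    exact ⟨j, ⟨by omega, fun h => hne (by simpa [Fin.ext_iff] using h)⟩, rfl⟩
  · rintro ⟨k, ⟨hk, hne⟩, rfl⟩
    exact ⟨⟨k, by omega⟩, fun h => hne (by simpa [Fin.ext_iff] using h), rfl⟩


/-- Conditioning on the two extreme points: the full family `(z₀, …, z_{N+1})` is in convex
position iff both the subfamily of points above the line `(z₀, z_{N+1})` (together with
`z₀, z_{N+1}`) and the subfamily of points below that line (together with `z₀, z_{N+1}`)
are in convex position. -/
theorem convexPos_iff_above_and_below (N : ℕ) (hN : 1 ≤ N) (u0 u1 : ℝ) (x y : ℕ → ℝ)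
    (hx0 : 0 < x 1) (hxmono : ∀ j, 1 ≤ j → j ≤ N - 1 → x j < x (j + 1)) (hx1 : x N < 1)
    (u : ℕ → ℝ) (hu : ∀ j, u j = u0 + x j * (u1 - u0))
    (hy : ∀ j, 1 ≤ j → j ≤ N → y j ≠ u j)
    (z : ℕ → ℝ × ℝ)
    (hz : ∀ j, z j = if j = 0 then (0, u0) else if j = N + 1 then (1, u1) else (x j, y j))
    (A : Finset ℕ) (hA : A = (Finset.Icc 1 N).filter (fun j => u j < y j)) :
    ConvexPos (fun j : Fin (N + 2) => z j) ↔
      ConvexPos (fun j : ↥(insert 0 (insert (N + 1) A)) => z j) ∧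
        ConvexPos (fun j : ↥(insert 0 (insert (N + 1) (Finset.Icc 1 N \ A))) => z j) := by
  -- basic coordinate facts
  have mono : ∀ i j, 1 ≤ i → i ≤ j → j ≤ N → x i ≤ x j := by
    intro i j h1 hij
    induction j, hij using Nat.le_induction with
    | base => intro _; exact le_rfl
    | succ n hn ih =>
      intro hn1
      exact (ih (by omega)).trans (hxmono n (by omega) (by omega)).le
  have hx01 : ∀ j, 1 ≤ j → j ≤ N → 0 < x j ∧ x j < 1 := fun j h1 h2 =>
    ⟨lt_of_lt_of_le hx0 (mono 1 j le_rfl h1 h2), lt_of_le_of_lt (mono j N h1 h2 le_rfl) hx1⟩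
  have hz0 : z 0 = (0, u0) := by rw [hz]; simp
  have hz1 : z (N + 1) = (1, u1) := by rw [hz]; simp
  have hzj : ∀ j, 1 ≤ j → j ≤ N → z j = (x j, y j) := by
    intro j h1 h2; rw [hz]; have : j ≠ 0 := by omega
    have : j ≠ N + 1 := by omega
    simp_all
  -- x-coordinate of every point is in [0,1]
  have hcoord : ∀ k, k ≤ N + 1 → 0 ≤ (z k).1 ∧ (z k).1 ≤ 1 := by
    intro k hk
    rcases Nat.eq_zero_or_pos k with h | h
    · subst h; rw [hz0]; norm_num
    · rcases eq_or_lt_of_le hk with h2 | h2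
      · subst h2; rw [hz1]; norm_num
      · rw [hzj k h (by omega)]
        exact ⟨(hx01 k h (by omega)).1.le, (hx01 k h (by omega)).2.le⟩
  set SA : Finset ℕ := insert 0 (insert (N + 1) A) with hSA
  set SB : Finset ℕ := insert 0 (insert (N + 1) (Finset.Icc 1 N \ A)) with hSB
  have hSAsub : ∀ k ∈ SA, k ≤ N + 1 := by
    intro k hk
    simp only [hSA, Finset.mem_insert] at hk
    rcases hk with rfl | rfl | hk
    · omega
    · omega
    · rw [hA] at hk; simp only [Finset.mem_filter, Finset.mem_Icc] at hk; omega
  have hSBsub : ∀ k ∈ SB, k ≤ N + 1 := by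
    intro k hk
    simp only [hSB, Finset.mem_insert] at hk
    rcases hk with rfl | rfl | hk
    · omega
    · omega
    · simp only [Finset.mem_sdiff, Finset.mem_Icc] at hk; omega
  constructor
  · -- forward: restriction of a convex-position family
    intro h
    constructor
    · intro i hmem
      have hi : (i : ℕ) ≤ N + 1 := hSAsub i i.2
      have : z (i : ℕ) ∈ convexHull ℝ
          ((fun j : Fin (N + 2) => z ↑j) '' {j | j ≠ ⟨(i : ℕ), by omega⟩}) := by
        rw [img_fin]
        refine convexHull_mono ?_ (by rw [img_sub] at hmem; exact hmem)
        exact Set.image_mono (fun k hk => ⟨hSAsub k hk.1, hk.2⟩)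
      exact h ⟨(i : ℕ), by omega⟩ this
    · intro i hmem
      have hi : (i : ℕ) ≤ N + 1 := hSBsub i i.2
      have : z (i : ℕ) ∈ convexHull ℝ
          ((fun j : Fin (N + 2) => z ↑j) '' {j | j ≠ ⟨(i : ℕ), by omega⟩}) := by
        rw [img_fin]
        refine convexHull_mono ?_ (by rw [img_sub] at hmem; exact hmem)
        exact Set.image_mono (fun k hk => ⟨hSBsub k hk.1, hk.2⟩)
      exact h ⟨(i : ℕ), by omega⟩ this
  · -- backward: the interesting direction
    rintro ⟨hA', hB'⟩ i hmem
    rw [img_fin] at hmem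
    set S : Set (ℝ × ℝ) := z '' {k | k ≤ N + 1 ∧ k ≠ ↑i} with hS
    have hSx : ∀ p ∈ S, 0 ≤ p.1 ∧ p.1 ≤ 1 := by
      rintro p ⟨k, ⟨hk, _⟩, rfl⟩; exact hcoord k hk
    rcases Nat.eq_zero_or_pos (i : ℕ) with hi0 | hipos
    · -- i = 0 : leftmost point
      have hzi : z (i : ℕ) = (0, u0) := by rw [hi0, hz0]
      have hsub : S ⊆ {p : ℝ × ℝ | 0 < p.1} := by
        rintro p ⟨k, ⟨hk, hne⟩, rfl⟩
        have hk1 : 1 ≤ k := by omega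
        rcases eq_or_lt_of_le hk with h2 | h2
        · subst h2; rw [hz1]; norm_num
        · rw [hzj k hk1 (by omega)]; exact (hx01 k hk1 (by omega)).1
      have hconv : Convex ℝ {p : ℝ × ℝ | 0 < p.1} :=
        convex_halfSpace_gt (⟨fun a b => rfl, fun c a => rfl⟩ : IsLinearMap ℝ (Prod.fst : ℝ × ℝ → ℝ)) 0
      have := convexHull_min hsub hconv hmem
      simp only [hzi, Set.mem_setOf_eq] at this; norm_num at this
    rcases eq_or_lt_of_le (show (i : ℕ) ≤ N + 1 by omega) with hiN | hiN
    · -- i = N+1 : rightmost point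
      have hzi : z (i : ℕ) = (1, u1) := by rw [hiN, hz1]
      have hsub : S ⊆ {p : ℝ × ℝ | p.1 < 1} := by
        rintro p ⟨k, ⟨hk, hne⟩, rfl⟩
        have hkN : k ≤ N := by omega
        rcases Nat.eq_zero_or_pos k with h | h
        · subst h; rw [hz0]; norm_num
        · rw [hzj k h hkN]; exact (hx01 k h hkN).2
      have hconv : Convex ℝ {p : ℝ × ℝ | p.1 < 1} :=
        convex_halfSpace_lt (⟨fun a b => rfl, fun c a => rfl⟩ : IsLinearMap ℝ (Prod.fst : ℝ × ℝ → ℝ)) 1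
      have := convexHull_min hsub hconv hmem
      simp only [hzi, Set.mem_setOf_eq] at this; norm_num at this
    · -- 1 ≤ i ≤ N
      have hi1 : 1 ≤ (i : ℕ) := hipos
      have hiNle : (i : ℕ) ≤ N := by omega
      have hzi : z (i : ℕ) = (x i, y i) := hzj i hi1 hiNle
      -- value of the affine functional on each point
      have hfz : ∀ k, 1 ≤ k → k ≤ N →
          (z k).2 - (u0 + (z k).1 * (u1 - u0)) = y k - u k := by
        intro k h1 h2; rw [hzj k h1 h2, hu k]
      have hfz0 : (z 0).2 - (u0 + (z 0).1 * (u1 - u0)) = 0 := by rw [hz0]; simp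
      have hfz1 : (z (N+1)).2 - (u0 + (z (N+1)).1 * (u1 - u0)) = 0 := by rw [hz1]; simp
      by_cases hiA : (i : ℕ) ∈ A
      · -- above
        have hyu : u i < y i := by
          rw [hA] at hiA; exact (Finset.mem_filter.1 hiA).2
        have hfp : 0 ≤ (1 : ℝ) * ((z (i:ℕ)).2 - (u0 + (z (i:ℕ)).1 * (u1 - u0))) := by
          rw [hfz i hi1 hiNle]; linarith
        have := geom_aux u0 u1 1 one_ne_zero S hSx (z i) hmem hfp
        have hsub2 : ({q ∈ S | 0 < (1:ℝ) * (q.2 - (u0 + q.1 * (u1 - u0)))} ∪ {(0, u0), (1, u1)})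
            ⊆ z '' {k | k ∈ SA ∧ k ≠ ↑i} := by
          rintro p (⟨⟨k, ⟨hk, hne⟩, rfl⟩, hfq⟩ | hp)
          · -- a point of the family with positive functional value
            rcases Nat.eq_zero_or_pos k with h | h
            · exfalso; subst h; rw [one_mul, hfz0] at hfq; exact lt_irrefl 0 hfq
            rcases eq_or_lt_of_le hk with h2 | h2
            · exfalso; subst h2; rw [one_mul, hfz1] at hfq; exact lt_irrefl 0 hfq
            have hkN : k ≤ N := by omega
            have hkA : k ∈ A := by
              rw [hA]; refine Finset.mem_filter.2 ⟨Finset.mem_Icc.2 ⟨h, hkN⟩, ?_⟩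
              rw [one_mul, hfz k h hkN] at hfq; linarith
            exact ⟨k, ⟨by simp [hSA, hkA], hne⟩, rfl⟩
          · rcases hp with rfl | hp
            · exact ⟨0, ⟨by simp [hSA], by omega⟩, hz0⟩
            · rcases hp with rfl
              exact ⟨N + 1, ⟨by simp [hSA], by omega⟩, hz1⟩
        have hmem' : z (i : ℕ) ∈ convexHull ℝ (z '' {k | k ∈ SA ∧ k ≠ ↑i}) :=
          convexHull_mono hsub2 this
        have hiSA : (i : ℕ) ∈ SA := by simp [hSA, hiA]
        refine hA' ⟨(i : ℕ), hiSA⟩ ?_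
        rw [img_sub]; exact hmem'
      · -- below
        have hyu : y i < u i := by
          have hne := hy i hi1 hiNle
          have : ¬ u i < y i := by
            intro h; exact hiA (by rw [hA]; exact Finset.mem_filter.2 ⟨Finset.mem_Icc.2 ⟨hi1, hiNle⟩, h⟩)
          rcases lt_trichotomy (y i) (u i) with h | h | h
          · exact h
          · exact absurd h hne
          · exact absurd h this
        have hfp : 0 ≤ (-1 : ℝ) * ((z (i:ℕ)).2 - (u0 + (z (i:ℕ)).1 * (u1 - u0))) := by
          rw [hfz i hi1 hiNle]; linarith
        have := geom_aux u0 u1 (-1) (by norm_num) S hSx (z i) hmem hfp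
        have hsub2 : ({q ∈ S | 0 < (-1:ℝ) * (q.2 - (u0 + q.1 * (u1 - u0)))} ∪ {(0, u0), (1, u1)})
            ⊆ z '' {k | k ∈ SB ∧ k ≠ ↑i} := by
          rintro p (⟨⟨k, ⟨hk, hne⟩, rfl⟩, hfq⟩ | hp)
          · rcases Nat.eq_zero_or_pos k with h | h
            · exfalso; subst h; rw [hfz0] at hfq; norm_num at hfq
            rcases eq_or_lt_of_le hk with h2 | h2
            · exfalso; subst h2; rw [hfz1] at hfq; norm_num at hfq
            have hkN : k ≤ N := by omega
            have hkB : k ∈ Finset.Icc 1 N \ A := by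
              refine Finset.mem_sdiff.2 ⟨Finset.mem_Icc.2 ⟨h, hkN⟩, ?_⟩
              rw [hA]; intro hc
              have := (Finset.mem_filter.1 hc).2
              rw [hfz k h hkN] at hfq; nlinarith
            exact ⟨k, ⟨by simp [hSB, hkB], hne⟩, rfl⟩
          · rcases hp with rfl | hp
            · exact ⟨0, ⟨by simp [hSB], by omega⟩, hz0⟩
            · rcases hp with rfl
              exact ⟨N + 1, ⟨by simp [hSB], by omega⟩, hz1⟩
        have hmem' : z (i : ℕ) ∈ convexHull ℝ (z '' {k | k ∈ SB ∧ k ≠ ↑i}) :=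
          convexHull_mono hsub2 this
        have hiSB : (i : ℕ) ∈ SB := by
          simp only [hSB, Finset.mem_insert]
          exact Or.inr (Or.inr (Finset.mem_sdiff.2 ⟨Finset.mem_Icc.2 ⟨hi1, hiNle⟩, hiA⟩))
        refine hB' ⟨(i : ℕ), hiSB⟩ ?_
        rw [img_sub]; exact hmem'

end
end

section
/- For every m ≥ 1, every 0 = x₀ < x₁ < … < x_{m+1} = 1 and every reals γ₀, …, γ_{m+1}, one has K*(x[m+2], γ[m+2]) = (1/m!) Σ_{σ ∈ S({1,…,m})} ∏_{j=1}^m q̃_{σ,j}, where for each permutation σ and each j: L_j(σ) is the maximum of {σ_i : i < j, σ_i < σ_j} (taken to be 0 if this set is empty), R_j(σ) is the minimum of {σ_i : i < j, σ_i > σ_j} (taken to be m+1 if this set is empty), and q̃_{σ,j} = ( (γ_{σ_j} − γ_{L_j(σ)})/(x_{σ_j} − x_{L_j(σ)}) − (γ_{R_j(σ)} − γ_{σ_j})/(x_{R_j(σ)} − x_{σ_j}) ) · (x_{σ_j} − x_{L_j(σ)})(x_{R_j(σ)} − x_{σ_j}) / (x_{R_j(σ)} − x_{L_j(σ)}). 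-/
noncomputable section

/-- A directed triangle `t = (j₁, j₂, j₃)` fits in the integer interval `[a, b]` if its
three indices belong to `[a, b]`. -/
def TriIn (t : ℕ × ℕ × ℕ) (a b : ℕ) : Prop :=
  t.1 ∈ Finset.Icc a b ∧ t.2.1 ∈ Finset.Icc a b ∧ t.2.2 ∈ Finset.Icc a b

/-- `t` fits in one of the four intervals `[0, j₁']`, `[j₁', j₂']`, `[j₂', j₃']`,
`[j₃', m+1]` determined by `t' = (j₁', j₂', j₃')`. -/
def FitsIn (m : ℕ) (t t' : ℕ × ℕ × ℕ) : Prop :=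
  TriIn t 0 t'.1 ∨ TriIn t t'.1 t'.2.1 ∨ TriIn t t'.2.1 t'.2.2 ∨ TriIn t t'.2.2 (m + 1)

/-- A triangulation of `{0, 1, …, m+1}` : a set of `m` directed triangles which are
pairwise non-crossing and whose middle indices are exactly `1, …, m`. -/
def IsTriangulation (m : ℕ) (T : Finset (ℕ × ℕ × ℕ)) : Prop :=
  T.card = m ∧
    (∀ t ∈ T, t.1 < t.2.1 ∧ t.2.1 < t.2.2 ∧ t.2.2 ≤ m + 1) ∧
    (∀ t ∈ T, ∀ t' ∈ T, t ≠ t' → FitsIn m t t' ∨ FitsIn m t' t) ∧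
    T.image (fun t => t.2.1) = Finset.Icc 1 m

/-- `q_t(γ)` : the (signed) vertical distance from the middle vertex of `t` to the chord
joining its extreme vertices, divided by `j₃ - j₁ - 1`. -/
noncomputable def qTri (x γ : ℕ → ℝ) (t : ℕ × ℕ × ℕ) : ℝ :=
  (γ t.2.1 - (γ t.1 + (x t.2.1 - x t.1) / (x t.2.2 - x t.1) * (γ t.2.2 - γ t.1))) /
    ((t.2.2 - t.1 - 1 : ℕ) : ℝ)

open scoped Classical in
/-- `K*(x[m+2], γ[m+2]) = Σ_{T triangulation} ∏_{t ∈ T} q_t(γ)`. -/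
noncomputable def Kstar (m : ℕ) (x γ : ℕ → ℝ) : ℝ :=
  ∑ T ∈ (Finset.range (m + 2) ×ˢ Finset.range (m + 2) ×ˢ Finset.range (m + 2)).powerset,
    if IsTriangulation m T then ∏ t ∈ T, qTri x γ t else 0

/-- `L_j(σ)` : with positions and values in `{1, …, m}` (encoded by `Fin m`, position `i`
standing for `i+1`), the maximum of `{σ_i : i < j, σ_i < σ_j}`, or `0` if this set is
empty. -/
def Lind (m : ℕ) (σ : Equiv.Perm (Fin m)) (j : Fin m) : ℕ :=
  (((Finset.univ.filter fun i : Fin m => i < j ∧ σ i < σ j).image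
      fun i => (σ i : ℕ) + 1).max).unbotD 0

/-- `R_j(σ)` : the minimum of `{σ_i : i < j, σ_i > σ_j}`, or `m+1` if this set is empty. -/
def Rind (m : ℕ) (σ : Equiv.Perm (Fin m)) (j : Fin m) : ℕ :=
  (((Finset.univ.filter fun i : Fin m => i < j ∧ σ j < σ i).image
      fun i => (σ i : ℕ) + 1).min).untopD (m + 1)

/-- The factor `q̃_{σ,j}`. -/
noncomputable def qTilde (m : ℕ) (x γ : ℕ → ℝ) (σ : Equiv.Perm (Fin m)) (j : Fin m) : ℝ :=
  ((γ ((σ j : ℕ) + 1) - γ (Lind m σ j)) / (x ((σ j : ℕ) + 1) - x (Lind m σ j)) -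
      (γ (Rind m σ j) - γ ((σ j : ℕ) + 1)) / (x (Rind m σ j) - x ((σ j : ℕ) + 1))) *
    ((x ((σ j : ℕ) + 1) - x (Lind m σ j)) * (x (Rind m σ j) - x ((σ j : ℕ) + 1)) /
      (x (Rind m σ j) - x (Lind m σ j)))

/-! ### Interval triangulations -/

lemma triIn_iff (t : ℕ × ℕ × ℕ) (a b : ℕ) :
    TriIn t a b ↔ a ≤ t.1 ∧ t.1 ≤ b ∧ a ≤ t.2.1 ∧ t.2.1 ≤ b ∧ a ≤ t.2.2 ∧ t.2.2 ≤ b := by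
  simp [TriIn, Finset.mem_Icc]; tauto

def IsTri (m lo hi : ℕ) (T : Finset (ℕ × ℕ × ℕ)) : Prop :=
  T.card = hi - lo - 1 ∧
    (∀ t ∈ T, lo ≤ t.1 ∧ t.1 < t.2.1 ∧ t.2.1 < t.2.2 ∧ t.2.2 ≤ hi) ∧
    (∀ t ∈ T, ∀ t' ∈ T, t ≠ t' → FitsIn m t t' ∨ FitsIn m t' t) ∧
    T.image (fun t => t.2.1) = Finset.Ioo lo hi

open scoped Classical in
noncomputable def Tset (m lo hi : ℕ) : Finset (Finset (ℕ × ℕ × ℕ)) :=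
  (Finset.range (m + 2) ×ˢ Finset.range (m + 2) ×ˢ Finset.range (m + 2)).powerset.filter
    (IsTri m lo hi)

noncomputable def Rrec (x γ : ℕ → ℝ) (lo hi : ℕ) : ℝ :=
  if hi ≤ lo + 1 then 1
  else
    ∑ k ∈ (Finset.Ioo lo hi).attach,
      qTri x γ (lo, k.1, hi) * Rrec x γ lo k.1 * Rrec x γ k.1 hi
termination_by hi - lo
decreasing_by
  · have := Finset.mem_Ioo.mp k.2; omega
  · have := Finset.mem_Ioo.mp k.2; omega

lemma Rrec_base (x γ : ℕ → ℝ) {lo hi : ℕ} (h : hi ≤ lo + 1) : Rrec x γ lo hi = 1 := by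
  rw [Rrec]; simp [h]

lemma Rrec_step (x γ : ℕ → ℝ) {lo hi : ℕ} (h : lo + 1 < hi) :
    Rrec x γ lo hi =
      ∑ k ∈ Finset.Ioo lo hi, qTri x γ (lo, k, hi) * Rrec x γ lo k * Rrec x γ k hi := by
  rw [Rrec]
  rw [if_neg (by omega)]
  rw [← Finset.sum_attach (Finset.Ioo lo hi)
    (fun k => qTri x γ (lo, k, hi) * Rrec x γ lo k * Rrec x γ k hi)]
/-! ### Structure theory -/

section Struct

variable {m lo hi : ℕ} {T : Finset (ℕ × ℕ × ℕ)}

lemma mid_mem (h : IsTri m lo hi T) {t : ℕ × ℕ × ℕ} (ht : t ∈ T) :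
    lo < t.2.1 ∧ t.2.1 < hi := by
  have : t.2.1 ∈ T.image (fun t => t.2.1) := Finset.mem_image_of_mem _ ht
  rw [h.2.2.2] at this
  exact Finset.mem_Ioo.mp this

lemma mid_inj (h : IsTri m lo hi T) : Set.InjOn (fun t : ℕ × ℕ × ℕ => t.2.1) T := by
  refine Finset.card_image_iff.mp ?_
  rw [h.2.2.2, Nat.card_Ioo, h.1]

lemma exists_root (h : IsTri m lo hi T) (hlt : lo + 1 < hi) :
    ∃ k, lo < k ∧ k < hi ∧ (lo, k, hi) ∈ T := by
  have hne : T.Nonempty := by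
    rw [← Finset.card_pos, h.1]; omega
  obtain ⟨t, htT, hmax⟩ := T.exists_max_image (fun t => t.2.2 - t.1) hne
  obtain ⟨ht1, ht2, ht3, ht4⟩ := h.2.1 t htT
  obtain ⟨hm1, hm2⟩ := mid_mem h htT
  have hL : t.1 = lo := by
    by_contra hne1
    have h1 : t.1 ∈ Finset.Ioo lo hi := Finset.mem_Ioo.mpr ⟨by omega, by omega⟩
    rw [← h.2.2.2] at h1
    obtain ⟨t', ht'T, ht'mid⟩ := Finset.mem_image.mp h1
    have htne : t ≠ t' := by
      intro he; rw [← he] at ht'mid; omega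
    obtain ⟨hb1, hb2, hb3, hb4⟩ := h.2.1 t' ht'T
    have hsp := hmax t' ht'T
    rcases h.2.2.1 t htT t' ht'T htne with hc | hc <;>
      · simp only [FitsIn, triIn_iff] at hc; omega
  have hR : t.2.2 = hi := by
    by_contra hne1
    have h1 : t.2.2 ∈ Finset.Ioo lo hi := Finset.mem_Ioo.mpr ⟨by omega, by omega⟩
    rw [← h.2.2.2] at h1
    obtain ⟨t', ht'T, ht'mid⟩ := Finset.mem_image.mp h1
    have htne : t ≠ t' := by
      intro he; rw [← he] at ht'mid; omega
    obtain ⟨hb1, hb2, hb3, hb4⟩ := h.2.1 t' ht'T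
    have hsp := hmax t' ht'T
    rcases h.2.2.1 t htT t' ht'T htne with hc | hc <;>
      · simp only [FitsIn, triIn_iff] at hc; omega
  refine ⟨t.2.1, hm1, hm2, ?_⟩
  have : (lo, t.2.1, hi) = t := by
    rw [← hL, ← hR]
  rwa [this]

lemma side_of_ne (h : IsTri m lo hi T) {k : ℕ} (hk1 : lo < k) (hk2 : k < hi)
    (hroot : (lo, k, hi) ∈ T) {t : ℕ × ℕ × ℕ} (ht : t ∈ T) (hne : t ≠ (lo, k, hi)) :
    t.2.2 ≤ k ∨ k ≤ t.1 := by
  obtain ⟨hb1, hb2, hb3, hb4⟩ := h.2.1 t ht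
  obtain ⟨hm1, hm2⟩ := mid_mem h ht
  rcases h.2.2.1 t ht _ hroot hne with hc | hc <;>
    · simp only [FitsIn, triIn_iff] at hc; omega

lemma split_left (h : IsTri m lo hi T) {k : ℕ} (hk1 : lo < k) (hk2 : k < hi)
    (hroot : (lo, k, hi) ∈ T) :
    IsTri m lo k (T.filter (fun t => t.2.2 ≤ k)) := by
  classical
  set F := T.filter (fun t : ℕ × ℕ × ℕ => t.2.2 ≤ k) with hF
  have hsub : F ⊆ T := Finset.filter_subset _ _
  have himg : F.image (fun t => t.2.1) = Finset.Ioo lo k := by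
    ext j
    simp only [Finset.mem_image, Finset.mem_Ioo]
    constructor
    · rintro ⟨t, htF, rfl⟩
      obtain ⟨ht, hle⟩ := Finset.mem_filter.mp htF
      obtain ⟨hb1, hb2, hb3, hb4⟩ := h.2.1 t ht
      obtain ⟨hm1, hm2⟩ := mid_mem h ht
      exact ⟨hm1, by omega⟩
    · rintro ⟨hj1, hj2⟩
      have : j ∈ Finset.Ioo lo hi := Finset.mem_Ioo.mpr ⟨hj1, by omega⟩
      rw [← h.2.2.2] at this
      obtain ⟨t, htT, rfl⟩ := Finset.mem_image.mp this
      have hne : t ≠ (lo, k, hi) := by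
        intro he; rw [he] at hj2; simp at hj2
      obtain ⟨hb1, hb2, hb3, hb4⟩ := h.2.1 t htT
      rcases side_of_ne h hk1 hk2 hroot htT hne with hs | hs
      · exact ⟨t, Finset.mem_filter.mpr ⟨htT, hs⟩, rfl⟩
      · omega
  refine ⟨?_, ?_, ?_, himg⟩
  · have := Finset.card_image_of_injOn ((mid_inj h).mono (Finset.coe_subset.mpr hsub))
    rw [himg, Nat.card_Ioo] at this
    omega
  · intro t htF
    obtain ⟨ht, hle⟩ := Finset.mem_filter.mp htF
    obtain ⟨hb1, hb2, hb3, hb4⟩ := h.2.1 t ht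
    exact ⟨hb1, hb2, hb3, hle⟩
  · intro t ht t' ht' hne
    exact h.2.2.1 t (hsub ht) t' (hsub ht') hne

lemma split_right (h : IsTri m lo hi T) {k : ℕ} (hk1 : lo < k) (hk2 : k < hi)
    (hroot : (lo, k, hi) ∈ T) :
    IsTri m k hi (T.filter (fun t => k ≤ t.1)) := by
  classical
  set F := T.filter (fun t : ℕ × ℕ × ℕ => k ≤ t.1) with hF
  have hsub : F ⊆ T := Finset.filter_subset _ _
  have himg : F.image (fun t => t.2.1) = Finset.Ioo k hi := by
    ext j
    simp only [Finset.mem_image, Finset.mem_Ioo]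
    constructor
    · rintro ⟨t, htF, rfl⟩
      obtain ⟨ht, hle⟩ := Finset.mem_filter.mp htF
      obtain ⟨hb1, hb2, hb3, hb4⟩ := h.2.1 t ht
      obtain ⟨hm1, hm2⟩ := mid_mem h ht
      exact ⟨by omega, hm2⟩
    · rintro ⟨hj1, hj2⟩
      have : j ∈ Finset.Ioo lo hi := Finset.mem_Ioo.mpr ⟨by omega, hj2⟩
      rw [← h.2.2.2] at this
      obtain ⟨t, htT, rfl⟩ := Finset.mem_image.mp this
      have hne : t ≠ (lo, k, hi) := by
        intro he; rw [he] at hj1; simp at hj1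
      obtain ⟨hb1, hb2, hb3, hb4⟩ := h.2.1 t htT
      rcases side_of_ne h hk1 hk2 hroot htT hne with hs | hs
      · omega
      · exact ⟨t, Finset.mem_filter.mpr ⟨htT, hs⟩, rfl⟩
  refine ⟨?_, ?_, ?_, himg⟩
  · have := Finset.card_image_of_injOn ((mid_inj h).mono (Finset.coe_subset.mpr hsub))
    rw [himg, Nat.card_Ioo] at this
    omega
  · intro t htF
    obtain ⟨ht, hle⟩ := Finset.mem_filter.mp htF
    obtain ⟨hb1, hb2, hb3, hb4⟩ := h.2.1 t ht
    exact ⟨hle, hb2, hb3, hb4⟩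
  · intro t ht t' ht' hne
    exact h.2.2.1 t (hsub ht) t' (hsub ht') hne

lemma split_eq (h : IsTri m lo hi T) {k : ℕ} (hk1 : lo < k) (hk2 : k < hi)
    (hroot : (lo, k, hi) ∈ T) :
    T = insert (lo, k, hi)
        (T.filter (fun t => t.2.2 ≤ k) ∪ T.filter (fun t => k ≤ t.1)) := by
  classical
  ext t
  simp only [Finset.mem_insert, Finset.mem_union, Finset.mem_filter]
  constructor
  · intro ht
    by_cases he : t = (lo, k, hi)
    · exact Or.inl he
    · rcases side_of_ne h hk1 hk2 hroot ht he with hs | hs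
      · exact Or.inr (Or.inl ⟨ht, hs⟩)
      · exact Or.inr (Or.inr ⟨ht, hs⟩)
  · rintro (rfl | ⟨ht, _⟩ | ⟨ht, _⟩) <;> first | exact hroot | exact ht

end Struct
/-! ### Gluing -/

section Glue

variable {m lo k hi : ℕ} {T₁ T₂ : Finset (ℕ × ℕ × ℕ)}

lemma glue_isTri (hk1 : lo < k) (hk2 : k < hi) (hhi : hi ≤ m + 1)
    (h1 : IsTri m lo k T₁) (h2 : IsTri m k hi T₂) :
    IsTri m lo hi (insert (lo, k, hi) (T₁ ∪ T₂)) := by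
  classical
  have hb1 := h1.2.1
  have hb2 := h2.2.1
  have hnotin1 : (lo, k, hi) ∉ T₁ := fun hmem => by
    have := (hb1 _ hmem).2.2.2; simp at this; omega
  have hnotin2 : (lo, k, hi) ∉ T₂ := fun hmem => by
    have := (hb2 _ hmem).1; simp at this; omega
  have hdisj : Disjoint T₁ T₂ := by
    rw [Finset.disjoint_left]
    intro t ht1 ht2
    have := (hb1 _ ht1).2.2.2
    have := (hb2 _ ht2).1
    have := (hb1 _ ht1).2.1
    have := (hb1 _ ht1).2.2.1
    omega
  refine ⟨?_, ?_, ?_, ?_⟩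
  · rw [Finset.card_insert_of_notMem (by simp [hnotin1, hnotin2]),
      Finset.card_union_of_disjoint hdisj, h1.1, h2.1]
    omega
  · intro t ht
    rcases Finset.mem_insert.mp ht with rfl | ht
    · exact ⟨le_refl _, hk1, hk2, le_refl _⟩
    · rcases Finset.mem_union.mp ht with ht | ht
      · have := hb1 _ ht; exact ⟨this.1, this.2.1, this.2.2.1, by omega⟩
      · have := hb2 _ ht; exact ⟨by omega, this.2.1, this.2.2.1, this.2.2.2⟩
  · intro t ht t' ht' hne
    have sides : ∀ s, s ∈ insert (lo, k, hi) (T₁ ∪ T₂) →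
        s = (lo, k, hi) ∨ (s ∈ T₁ ∧ TriIn s lo k) ∨ (s ∈ T₂ ∧ TriIn s k hi) := by
      intro s hs
      rcases Finset.mem_insert.mp hs with rfl | hs
      · exact Or.inl rfl
      · rcases Finset.mem_union.mp hs with hs | hs
        · have := hb1 _ hs
          exact Or.inr (Or.inl ⟨hs, (triIn_iff _ _ _).mpr (by omega)⟩)
        · have := hb2 _ hs
          exact Or.inr (Or.inr ⟨hs, (triIn_iff _ _ _).mpr (by omega)⟩)
    rcases sides t ht with rfl | ⟨htm, htin⟩ | ⟨htm, htin⟩ <;>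
      rcases sides t' ht' with rfl | ⟨htm', htin'⟩ | ⟨htm', htin'⟩
    · exact absurd rfl hne
    · -- t = root, t' ∈ T₁ ⊆ [lo,k] : root fits in [t'.2.2, m+1]? no. t' fits: t' in [0, root.1]? root.1 = lo.
      -- t' ⊆ [lo,k] = [root.1, root.2.1] : FitsIn t' root via second disjunct
      exact Or.inr (Or.inr (Or.inl htin'))
    · exact Or.inr (Or.inr (Or.inr (Or.inl htin')))
    · exact Or.inl (Or.inr (Or.inl htin))
    · exact h1.2.2.1 t htm t' htm' hne
    · -- t ∈ T₁ (⊆ [lo,k]), t' ∈ T₂ (⊆ [k,hi]) : t ⊆ [0, t'.1] since t'.1 ≥ k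
      left; left
      have h1' := (triIn_iff _ _ _).mp htin
      have h2' := (triIn_iff _ _ _).mp htin'
      exact (triIn_iff _ _ _).mpr (by omega)
    · exact Or.inl (Or.inr (Or.inr (Or.inl htin)))
    · right; left
      have h1' := (triIn_iff _ _ _).mp htin
      have h2' := (triIn_iff _ _ _).mp htin'
      exact (triIn_iff _ _ _).mpr (by omega)
    · exact h2.2.2.1 t htm t' htm' hne
  · rw [Finset.image_insert, Finset.image_union, h1.2.2.2, h2.2.2.2]
    ext j
    simp only [Finset.mem_insert, Finset.mem_union, Finset.mem_Ioo]
    constructor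
    · rintro (rfl | h | h) <;> simp_all <;> omega
    · rintro ⟨hj1, hj2⟩
      rcases Nat.lt_trichotomy j k with hj | rfl | hj
      · exact Or.inr (Or.inl ⟨hj1, hj⟩)
      · exact Or.inl rfl
      · exact Or.inr (Or.inr ⟨hj, hj2⟩)

lemma glue_notmem (h1 : IsTri m lo k T₁) (h2 : IsTri m k hi T₂)
    (hk1 : lo < k) (hk2 : k < hi) :
    (lo, k, hi) ∉ T₁ ∪ T₂ := by
  intro hmem
  rcases Finset.mem_union.mp hmem with h | h
  · have := (h1.2.1 _ h).2.2.2; simp at this; omega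
  · have := (h2.2.1 _ h).1; simp at this; omega

lemma glue_disjoint (h1 : IsTri m lo k T₁) (h2 : IsTri m k hi T₂) : Disjoint T₁ T₂ := by
  rw [Finset.disjoint_left]
  intro t ht1 ht2
  have := (h1.2.1 _ ht1).2.2.2
  have := (h2.2.1 _ ht2).1
  have := (h1.2.1 _ ht1).2.1
  have := (h1.2.1 _ ht1).2.2.1
  omega

end Glue
/-! ### Sum over triangulations equals `Rrec` -/

lemma mem_Tset_iff {m lo hi : ℕ} (hhi : hi ≤ m + 1) {T : Finset (ℕ × ℕ × ℕ)} :
    T ∈ Tset m lo hi ↔ IsTri m lo hi T := by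
  classical
  rw [Tset, Finset.mem_filter, Finset.mem_powerset]
  refine ⟨fun h => h.2, fun h => ⟨fun t ht => ?_, h⟩⟩
  have hb := h.2.1 t ht
  simp only [Finset.mem_product, Finset.mem_range]
  omega

lemma tset_sum (x γ : ℕ → ℝ) (m : ℕ) :
    ∀ n lo hi, hi - lo ≤ n → lo < hi → hi ≤ m + 1 →
      ∑ T ∈ Tset m lo hi, ∏ t ∈ T, qTri x γ t = Rrec x γ lo hi := by
  classical
  intro n
  induction n with
  | zero => intro lo hi h1 h2 h3; omega
  | succ n ih =>
    intro lo hi h1 h2 h3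
    by_cases hbase : hi ≤ lo + 1
    · have hT : Tset m lo hi = {∅} := by
        ext T
        rw [mem_Tset_iff h3, Finset.mem_singleton]
        constructor
        · intro h
          rw [← Finset.card_eq_zero]
          have := h.1; omega
        · rintro rfl
          refine ⟨by simp; omega, by simp, by simp, ?_⟩
          rw [Finset.image_empty]
          ext j; simp only [Finset.notMem_empty, Finset.mem_Ioo, false_iff]; omega
      rw [hT, Finset.sum_singleton, Finset.prod_empty, Rrec_base x γ hbase]
    · push_neg at hbase
      rw [Rrec_step x γ hbase]
      have key : ∑ p ∈ (Finset.Ioo lo hi).sigma (fun k => Tset m lo k ×ˢ Tset m k hi),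
            qTri x γ (lo, p.1, hi) *
              ((∏ t ∈ p.2.1, qTri x γ t) * ∏ t ∈ p.2.2, qTri x γ t)
          = ∑ T ∈ Tset m lo hi, ∏ t ∈ T, qTri x γ t := by
        refine Finset.sum_bij (fun p _ => insert (lo, p.1, hi) (p.2.1 ∪ p.2.2)) ?_ ?_ ?_ ?_
        · rintro ⟨k, T₁, T₂⟩ hp
          simp only [Finset.mem_sigma, Finset.mem_product, Finset.mem_Ioo] at hp
          obtain ⟨⟨hk1, hk2⟩, hp1, hp2⟩ := hp
          have ht1 := (mem_Tset_iff (show k ≤ m + 1 by omega)).mp hp1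
          have ht2 := (mem_Tset_iff h3).mp hp2
          exact (mem_Tset_iff h3).mpr (glue_isTri hk1 hk2 h3 ht1 ht2)
        · rintro ⟨k, T₁, T₂⟩ hp ⟨k', T₁', T₂'⟩ hp' heq
          simp only [Finset.mem_sigma, Finset.mem_product, Finset.mem_Ioo] at hp hp'
          obtain ⟨⟨hk1, hk2⟩, hp1, hp2⟩ := hp
          obtain ⟨⟨hk1', hk2'⟩, hp1', hp2'⟩ := hp'
          have ht1 := (mem_Tset_iff (show k ≤ m + 1 by omega)).mp hp1
          have ht2 := (mem_Tset_iff h3).mp hp2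
          have ht1' := (mem_Tset_iff (show k' ≤ m + 1 by omega)).mp hp1'
          have ht2' := (mem_Tset_iff h3).mp hp2'
          simp only at heq
          have hkk : k = k' := by
            have hmem : (lo, k, hi) ∈ insert (lo, k', hi) (T₁' ∪ T₂') := by
              rw [← heq]; exact Finset.mem_insert_self _ _
            rcases Finset.mem_insert.mp hmem with he | he
            · have := congrArg (fun t : ℕ × ℕ × ℕ => t.2.1) he; simpa using this
            · rcases Finset.mem_union.mp he with he | he
              · have := (ht1'.2.1 _ he).2.2.2; simp at this; omega
              · have := (ht2'.2.1 _ he).1; simp at this; omega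
          subst hkk
          have h12 : T₁ = T₁' := by
            ext t
            constructor
            · intro htA
              have hmem : t ∈ insert (lo, k, hi) (T₁' ∪ T₂') := by
                rw [← heq]; exact Finset.mem_insert_of_mem (Finset.mem_union_left _ htA)
              have hbA := ht1.2.1 t htA
              rcases Finset.mem_insert.mp hmem with rfl | hu
              · simp at hbA; omega
              · rcases Finset.mem_union.mp hu with h' | h'
                · exact h'
                · have := ht2'.2.1 t h'; omega
            · intro htA
              have hmem : t ∈ insert (lo, k, hi) (T₁ ∪ T₂) := by
                rw [heq]; exact Finset.mem_insert_of_mem (Finset.mem_union_left _ htA)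
              have hbA := ht1'.2.1 t htA
              rcases Finset.mem_insert.mp hmem with rfl | hu
              · simp at hbA; omega
              · rcases Finset.mem_union.mp hu with h' | h'
                · exact h'
                · have := ht2.2.1 t h'; omega
          have h22 : T₂ = T₂' := by
            ext t
            constructor
            · intro htA
              have hmem : t ∈ insert (lo, k, hi) (T₁' ∪ T₂') := by
                rw [← heq]; exact Finset.mem_insert_of_mem (Finset.mem_union_right _ htA)
              have hbA := ht2.2.1 t htA
              rcases Finset.mem_insert.mp hmem with rfl | hu
              · simp at hbA; omega
              · rcases Finset.mem_union.mp hu with h' | h'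
                · have := ht1'.2.1 t h'; omega
                · exact h'
            · intro htA
              have hmem : t ∈ insert (lo, k, hi) (T₁ ∪ T₂) := by
                rw [heq]; exact Finset.mem_insert_of_mem (Finset.mem_union_right _ htA)
              have hbA := ht2'.2.1 t htA
              rcases Finset.mem_insert.mp hmem with rfl | hu
              · simp at hbA; omega
              · rcases Finset.mem_union.mp hu with h' | h'
                · have := ht1.2.1 t h'; omega
                · exact h'
          simp [h12, h22]
        · intro T hT
          have h := (mem_Tset_iff h3).mp hT
          obtain ⟨k, hk1, hk2, hroot⟩ := exists_root h hbase
          refine ⟨⟨k, (T.filter (fun t => t.2.2 ≤ k), T.filter (fun t => k ≤ t.1))⟩, ?_, ?_⟩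
          · simp only [Finset.mem_sigma, Finset.mem_product, Finset.mem_Ioo]
            exact ⟨⟨hk1, hk2⟩,
              (mem_Tset_iff (show k ≤ m + 1 by omega)).mpr (split_left h hk1 hk2 hroot),
              (mem_Tset_iff h3).mpr (split_right h hk1 hk2 hroot)⟩
          · exact (split_eq h hk1 hk2 hroot).symm
        · rintro ⟨k, T₁, T₂⟩ hp
          simp only [Finset.mem_sigma, Finset.mem_product, Finset.mem_Ioo] at hp
          obtain ⟨⟨hk1, hk2⟩, hp1, hp2⟩ := hp
          have ht1 := (mem_Tset_iff (show k ≤ m + 1 by omega)).mp hp1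
          have ht2 := (mem_Tset_iff h3).mp hp2
          simp only
          rw [Finset.prod_insert (glue_notmem ht1 ht2 hk1 hk2),
            Finset.prod_union (glue_disjoint ht1 ht2)]
      rw [← key, Finset.sum_sigma]
      refine Finset.sum_congr rfl fun k hk => ?_
      obtain ⟨hk1, hk2⟩ := Finset.mem_Ioo.mp hk
      have hsplit : ∀ (A B : Finset (Finset (ℕ × ℕ × ℕ))),
          ∑ T₁ ∈ A, ∑ T₂ ∈ B, qTri x γ (lo, k, hi) *
              ((∏ t ∈ T₁, qTri x γ t) * ∏ t ∈ T₂, qTri x γ t)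
          = qTri x γ (lo, k, hi) *
              ((∑ T₁ ∈ A, ∏ t ∈ T₁, qTri x γ t) * ∑ T₂ ∈ B, ∏ t ∈ T₂, qTri x γ t) := by
        intro A B
        rw [Finset.sum_mul_sum, Finset.mul_sum]
        refine Finset.sum_congr rfl fun T₁ _ => ?_
        rw [Finset.mul_sum]
      rw [Finset.sum_product]
      simp only
      rw [hsplit, ih lo k (by omega) hk1 (by omega), ih k hi (by omega) hk2 h3]
      ring
/-! ### Permutation side : list products -/

noncomputable def qt (x γ : ℕ → ℝ) (lo k hi : ℕ) : ℝ :=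
  ((γ k - γ lo) / (x k - x lo) - (γ hi - γ k) / (x hi - x k)) *
    ((x k - x lo) * (x hi - x k) / (x hi - x lo))

def Lof (lo : ℕ) (s : List ℕ) (v : ℕ) : ℕ := (s.filter (· < v)).foldr max lo

def Rof (hi : ℕ) (s : List ℕ) (v : ℕ) : ℕ := (s.filter (v < ·)).foldr min hi

noncomputable def Hl (x γ : ℕ → ℝ) (lo hi : ℕ) : List ℕ → List ℕ → ℝ
  | _, [] => 1
  | seen, k :: l => qt x γ (Lof lo seen k) k (Rof hi seen k) * Hl x γ lo hi (seen ++ [k]) l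

@[simp] lemma Hl_nil (x γ : ℕ → ℝ) (lo hi : ℕ) (seen : List ℕ) :
    Hl x γ lo hi seen [] = 1 := rfl

lemma Hl_cons (x γ : ℕ → ℝ) (lo hi : ℕ) (seen : List ℕ) (k : ℕ) (l : List ℕ) :
    Hl x γ lo hi seen (k :: l) =
      qt x γ (Lof lo seen k) k (Rof hi seen k) * Hl x γ lo hi (seen ++ [k]) l := rfl

/-! fold helpers -/

lemma le_foldr_max (s : List ℕ) (b : ℕ) : b ≤ s.foldr max b := by
  induction s with
  | nil => exact le_refl _
  | cons a s ih => exact le_trans ih (le_max_right _ _)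

lemma foldr_min_le (s : List ℕ) (b : ℕ) : s.foldr min b ≤ b := by
  induction s with
  | nil => exact le_refl _
  | cons a s ih => exact le_trans (min_le_right _ _) ih


lemma le_foldr_min (s : List ℕ) (b c : ℕ) (h : ∀ a ∈ s, c ≤ a) (hb : c ≤ b) :
    c ≤ s.foldr min b := by
  induction s with
  | nil => exact hb
  | cons a s ih =>
    simp only [List.foldr_cons]
    exact le_min (h a (List.mem_cons_self)) (ih (fun a ha => h a (List.mem_cons_of_mem _ ha)))

lemma foldr_max_const (s : List ℕ) (b : ℕ) (h : ∀ a ∈ s, a ≤ b) : s.foldr max b = b := by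
  induction s with
  | nil => rfl
  | cons a s ih =>
    simp only [List.foldr_cons, ih (fun a ha => h a (List.mem_cons_of_mem _ ha))]
    exact max_eq_right (h a (List.mem_cons_self))

lemma foldr_min_const (s : List ℕ) (b : ℕ) (h : ∀ a ∈ s, b ≤ a) : s.foldr min b = b := by
  induction s with
  | nil => rfl
  | cons a s ih =>
    simp only [List.foldr_cons, ih (fun a ha => h a (List.mem_cons_of_mem _ ha))]
    exact min_eq_right (h a (List.mem_cons_self))

lemma foldr_max_base (s : List ℕ) (k b : ℕ) (hb : b ≤ k) :
    max k (s.foldr max b) = s.foldr max k := by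
  induction s with
  | nil => exact max_eq_left hb
  | cons a s ih => simp only [List.foldr_cons, ← ih, max_left_comm]

lemma foldr_min_base (s : List ℕ) (k b : ℕ) (hb : k ≤ b) :
    min k (s.foldr min b) = s.foldr min k := by
  induction s with
  | nil => exact min_eq_left hb
  | cons a s ih => simp only [List.foldr_cons, ← ih, min_left_comm]

lemma foldr_max_perm {s s' : List ℕ} (h : s.Perm s') (b : ℕ) :
    s.foldr max b = s'.foldr max b := by
  induction h with
  | nil => rfl
  | cons a _ ih => simp [List.foldr_cons, ih]
  | swap a a' l => simp [List.foldr_cons, max_left_comm]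
  | trans _ _ ih1 ih2 => rw [ih1, ih2]

lemma foldr_min_perm {s s' : List ℕ} (h : s.Perm s') (b : ℕ) :
    s.foldr min b = s'.foldr min b := by
  induction h with
  | nil => rfl
  | cons a _ ih => simp [List.foldr_cons, ih]
  | swap a a' l => simp [List.foldr_cons, min_left_comm]
  | trans _ _ ih1 ih2 => rw [ih1, ih2]

lemma Lof_perm {s s' : List ℕ} (h : s.Perm s') (lo v : ℕ) : Lof lo s v = Lof lo s' v :=
  foldr_max_perm (h.filter _) lo

lemma Rof_perm {s s' : List ℕ} (h : s.Perm s') (hi v : ℕ) : Rof hi s v = Rof hi s' v :=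
  foldr_min_perm (h.filter _) hi

lemma Hl_perm_seen (x γ : ℕ → ℝ) (lo hi : ℕ) :
    ∀ (l : List ℕ) {s s' : List ℕ}, s.Perm s' → Hl x γ lo hi s l = Hl x γ lo hi s' l := by
  intro l
  induction l with
  | nil => intro s s' _; rfl
  | cons k l ih =>
    intro s s' h
    rw [Hl_cons, Hl_cons, Lof_perm h, Rof_perm h, ih (h.append_right [k])]

/-! the key splitting lemma -/

lemma Hl_split (x γ : ℕ → ℝ) (lo k hi : ℕ) (hk1 : lo < k) (hk2 : k < hi) :
    ∀ (l s₁ s₂ : List ℕ),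
      (∀ v ∈ l, lo < v ∧ v < hi ∧ v ≠ k) →
      (∀ a ∈ s₁, lo < a ∧ a < k) → (∀ a ∈ s₂, k < a ∧ a < hi) →
      Hl x γ lo hi (s₁ ++ k :: s₂) l =
        Hl x γ lo k s₁ (l.filter (· < k)) * Hl x γ k hi s₂ (l.filter (k < ·)) := by
  intro l
  induction l with
  | nil => intro s₁ s₂ _ _ _; simp
  | cons v l ih =>
    intro s₁ s₂ hl hs₁ hs₂
    obtain ⟨hv1, hv2, hv3⟩ := hl v (List.mem_cons_self)
    have hl' : ∀ u ∈ l, lo < u ∧ u < hi ∧ u ≠ k := fun u hu => hl u (List.mem_cons_of_mem _ hu)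
    rcases Nat.lt_or_ge v k with hvk | hvk
    · -- v goes left
      have hfl : (v :: l).filter (· < k) = v :: l.filter (· < k) := by
        rw [List.filter_cons_of_pos (by simpa using hvk)]
      have hfr : (v :: l).filter (k < ·) = l.filter (k < ·) := by
        rw [List.filter_cons_of_neg (by simpa using by omega)]
      rw [hfl, hfr, Hl_cons, Hl_cons]
      -- identify the L and R bounds
      have hLof : Lof lo (s₁ ++ k :: s₂) v = Lof lo s₁ v := by
        unfold Lof
        rw [List.filter_append]
        have : (k :: s₂).filter (· < v) = [] := by
          rw [List.filter_eq_nil_iff]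
          intro a ha
          rcases List.mem_cons.mp ha with rfl | ha
          · simpa using by omega
          · have := hs₂ a ha; simpa using by omega
        rw [this, List.append_nil]
      have hRof : Rof hi (s₁ ++ k :: s₂) v = Rof k s₁ v := by
        unfold Rof
        rw [List.filter_append]
        have h1 : (k :: s₂).filter (v < ·) = k :: s₂ := by
          rw [List.filter_eq_self]
          intro a ha
          rcases List.mem_cons.mp ha with rfl | ha
          · simpa using hvk
          · have := hs₂ a ha; simpa using by omega
        rw [h1, List.foldr_append]
        have h2 : (k :: s₂).foldr min hi = k := by
          simp only [List.foldr_cons]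
          exact min_eq_left
            (le_foldr_min s₂ hi k (fun a ha => le_of_lt (hs₂ a ha).1) (by omega))
        rw [h2]
      rw [hLof, hRof]
      have hseen : ((s₁ ++ k :: s₂) ++ [v]).Perm ((s₁ ++ [v]) ++ (k :: s₂)) := by
        rw [List.append_assoc, List.append_assoc]
        exact (List.perm_append_comm (l₁ := k :: s₂) (l₂ := [v])).append_left s₁
      rw [Hl_perm_seen x γ lo hi l hseen]
      rw [ih (s₁ ++ [v]) s₂ hl' (fun a ha => by
            rcases List.mem_append.mp ha with ha | ha
            · exact hs₁ a ha
            · simp at ha; omega) hs₂]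
      ring
    · -- v goes right
      have hvk' : k < v := by omega
      have hfl : (v :: l).filter (· < k) = l.filter (· < k) := by
        rw [List.filter_cons_of_neg (by simpa using by omega)]
      have hfr : (v :: l).filter (k < ·) = v :: l.filter (k < ·) := by
        rw [List.filter_cons_of_pos (by simpa using hvk')]
      rw [hfl, hfr, Hl_cons, Hl_cons]
      have hLof : Lof lo (s₁ ++ k :: s₂) v = Lof k s₂ v := by
        unfold Lof
        rw [List.filter_append]
        have h1 : s₁.filter (· < v) = s₁ := by
          rw [List.filter_eq_self]
          intro a ha; have := hs₁ a ha; simpa using by omega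
        have h2 : (k :: s₂).filter (· < v) = k :: s₂.filter (· < v) := by
          rw [List.filter_cons_of_pos (by simpa using hvk')]
        rw [h1, h2, List.foldr_append]
        simp only [List.foldr_cons]
        rw [foldr_max_base _ k lo (by omega)]
        refine foldr_max_const _ _ (fun a ha => ?_)
        exact le_trans (le_of_lt (hs₁ a ha).2) (le_foldr_max _ k)
      have hRof : Rof hi (s₁ ++ k :: s₂) v = Rof hi s₂ v := by
        unfold Rof
        rw [List.filter_append]
        have h1 : s₁.filter (v < ·) = [] := by
          rw [List.filter_eq_nil_iff]
          intro a ha; have := hs₁ a ha; simpa using by omega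
        have h2 : (k :: s₂).filter (v < ·) = s₂.filter (v < ·) := by
          rw [List.filter_cons_of_neg (by simpa using by omega)]
        rw [h1, h2, List.nil_append]
      rw [hLof, hRof]
      have hseen : (s₁ ++ k :: s₂) ++ [v] = s₁ ++ k :: (s₂ ++ [v]) := by
        simp
      rw [hseen]
      rw [ih s₁ (s₂ ++ [v]) hl' hs₁ (fun a ha => by
            rcases List.mem_append.mp ha with ha | ha
            · exact hs₂ a ha
            · simp at ha; omega)]
      ring
/-! ### Sums over permutations of a list -/

def PermsF (s : List ℕ) : Finset (List ℕ) := s.permutations.toFinset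

lemma mem_PermsF {s l : List ℕ} : l ∈ PermsF s ↔ l.Perm s := by
  simp [PermsF, List.mem_permutations]

lemma PermsF_congr {s s' : List ℕ} (h : s.Perm s') : PermsF s = PermsF s' := by
  ext l; simp only [mem_PermsF]
  exact ⟨fun h' => h'.trans h, fun h' => h'.trans h.symm⟩

lemma PermsF_nil : PermsF [] = {[]} := by
  ext l; simp [mem_PermsF, List.perm_nil]

lemma sum_PermsF_head (s : List ℕ) (hs : s ≠ []) (f : List ℕ → ℝ) :
    ∑ l ∈ PermsF s, f l =
      ∑ a ∈ s.toFinset, ∑ l' ∈ PermsF (s.erase a), f (a :: l') := by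
  classical
  rw [Finset.sum_sigma' s.toFinset (fun a => PermsF (s.erase a)) (fun a l' => f (a :: l'))]
  refine (Finset.sum_bij (fun p _ => p.1 :: p.2) ?_ ?_ ?_ ?_).symm
  · rintro ⟨a, l'⟩ hp
    simp only [Finset.mem_sigma, List.mem_toFinset, mem_PermsF] at hp
    rw [mem_PermsF]
    exact (hp.2.cons a).trans (List.perm_cons_erase hp.1).symm
  · rintro ⟨a, l⟩ _ ⟨a', l'⟩ _ heq
    simp only at heq
    obtain ⟨rfl, rfl⟩ := List.cons.inj heq
    rfl
  · intro l hl
    rw [mem_PermsF] at hl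
    match l, hl with
    | [], hl => exact absurd (List.perm_nil.mp hl.symm) hs
    | a :: l', hl =>
      refine ⟨⟨a, l'⟩, ?_, rfl⟩
      simp only [Finset.mem_sigma, List.mem_toFinset, mem_PermsF]
      refine ⟨hl.subset (List.mem_cons_self), ?_⟩
      have := hl.erase a
      rwa [List.erase_cons_head] at this
  · intro p _; rfl

lemma filter_erase_perm (s : List ℕ) (a : ℕ) (p : ℕ → Bool) (hp : p a = true) :
    ((s.erase a).filter p).Perm ((s.filter p).erase a) := by
  rw [List.perm_iff_count]
  intro b
  by_cases hb : p b = true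
  · rw [List.count_filter hb, List.count_erase, List.count_erase, List.count_filter hb]
  · have h1 : b ∉ (s.erase a).filter p := fun hmem => hb (List.of_mem_filter hmem)
    have h2 : b ∉ (s.filter p).erase a := fun hmem =>
      hb (List.of_mem_filter (List.mem_of_mem_erase hmem))
    rw [List.count_eq_zero.mpr h1, List.count_eq_zero.mpr h2]

lemma filter_erase_false (s : List ℕ) (a : ℕ) (p : ℕ → Bool) (hp : p a = false) :
    ((s.erase a).filter p).Perm (s.filter p) := by
  rw [List.perm_iff_count]
  intro b
  by_cases hb : p b = true
  · have hab : (a == b) = false := by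
      simp only [beq_eq_false_iff_ne]
      intro h; rw [h] at hp; rw [hb] at hp; exact Bool.noConfusion hp
    rw [List.count_filter hb, List.count_erase, List.count_filter hb, hab]
    simp
  · have h1 : b ∉ (s.erase a).filter p := fun hmem => hb (List.of_mem_filter hmem)
    have h2 : b ∉ s.filter p := fun hmem => hb (List.of_mem_filter hmem)
    rw [List.count_eq_zero.mpr h1, List.count_eq_zero.mpr h2]

lemma length_filter_add (s : List ℕ) (p : ℕ → Bool) :
    (s.filter p).length + (s.filter (fun a => !(p a))).length = s.length := by
  have := (List.filter_append_perm p s).length_eq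
  rwa [List.length_append] at this

lemma interleave_sum (p : ℕ → Bool) :
    ∀ (n : ℕ) (g h : List ℕ → ℝ) (s : List ℕ), s.length ≤ n →
      ∑ l ∈ PermsF s, g (l.filter p) * h (l.filter (fun a => !(p a))) =
        (s.length.choose ((s.filter p).length) : ℝ) *
          ((∑ l₁ ∈ PermsF (s.filter p), g l₁) *
            ∑ l₂ ∈ PermsF (s.filter (fun a => !(p a))), h l₂) := by
  classical
  intro n
  induction n with
  | zero =>
    intro g h s hs
    have : s = [] := List.length_eq_zero_iff.mp (Nat.le_zero.mp hs)
    subst this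
    simp [PermsF_nil]
  | succ n ih =>
    intro g h s hs
    rcases eq_or_ne s [] with rfl | hsne
    · simp [PermsF_nil]
    -- notation
    set sp := s.filter p with hsp
    set sq := s.filter (fun a => !(p a)) with hsq
    have hlen : sp.length + sq.length = s.length := length_filter_add s p
    have hslen : 1 ≤ s.length := by
      cases s with
      | nil => exact absurd rfl hsne
      | cons a l => simp
    rw [sum_PermsF_head s hsne]
    rw [← Finset.sum_filter_add_sum_filter_not s.toFinset (fun a => p a = true)]
    have hspF : s.toFinset.filter (fun a => p a = true) = sp.toFinset := by
      rw [hsp, List.toFinset_filter]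
    have hsqF : s.toFinset.filter (fun a => ¬p a = true) = sq.toFinset := by
      rw [hsq, List.toFinset_filter]
      ext a
      simp [Bool.not_eq_true']
    rw [hspF, hsqF]
    -- part 1 : heads with p a = true
    have part1 : ∀ a ∈ sp.toFinset,
        (∑ l' ∈ PermsF (s.erase a), g ((a :: l').filter p) *
            h ((a :: l').filter (fun x => !(p x))))
          = ((s.length - 1).choose (sp.length - 1) : ℝ) *
              ((∑ l₁ ∈ PermsF (sp.erase a), g (a :: l₁)) *
                ∑ l₂ ∈ PermsF sq, h l₂) := by
      intro a ha
      have hasp : a ∈ sp := List.mem_toFinset.mp ha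
      have has : a ∈ s := List.mem_of_mem_filter hasp
      have hpa : p a = true := List.of_mem_filter hasp
      have hlen1 : (s.erase a).length ≤ n := by
        rw [List.length_erase_of_mem has]; omega
      have e1 : ∀ l' : List ℕ, (a :: l').filter p = a :: l'.filter p :=
        fun l' => List.filter_cons_of_pos hpa
      have e2 : ∀ l' : List ℕ, (a :: l').filter (fun x => !(p x)) =
          l'.filter (fun x => !(p x)) :=
        fun l' => List.filter_cons_of_neg (by simp [hpa])
      simp only [e1, e2]
      rw [ih (fun t => g (a :: t)) h (s.erase a) hlen1]
      rw [PermsF_congr (filter_erase_perm s a p hpa),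
        PermsF_congr (filter_erase_false s a _ (by simp [hpa]))]
      have hl1 : ((s.erase a).filter p).length = sp.length - 1 := by
        rw [(filter_erase_perm s a p hpa).length_eq, List.length_erase_of_mem hasp]
      rw [hl1, List.length_erase_of_mem has]
    -- part 2 : heads with p a = false
    have part2 : ∀ a ∈ sq.toFinset,
        (∑ l' ∈ PermsF (s.erase a), g ((a :: l').filter p) *
            h ((a :: l').filter (fun x => !(p x))))
          = ((s.length - 1).choose (sp.length) : ℝ) *
              ((∑ l₁ ∈ PermsF sp, g l₁) *
                ∑ l₂ ∈ PermsF (sq.erase a), h (a :: l₂)) := by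
      intro a ha
      have hasq : a ∈ sq := List.mem_toFinset.mp ha
      have has : a ∈ s := List.mem_of_mem_filter hasq
      have hpa : p a = false := by
        have := List.of_mem_filter hasq
        simpa using this
      have hlen1 : (s.erase a).length ≤ n := by
        rw [List.length_erase_of_mem has]; omega
      have e1 : ∀ l' : List ℕ, (a :: l').filter p = l'.filter p :=
        fun l' => List.filter_cons_of_neg (by simp [hpa])
      have e2 : ∀ l' : List ℕ, (a :: l').filter (fun x => !(p x)) =
          a :: l'.filter (fun x => !(p x)) :=
        fun l' => List.filter_cons_of_pos (by simp [hpa])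
      simp only [e1, e2]
      rw [ih g (fun t => h (a :: t)) (s.erase a) hlen1]
      rw [PermsF_congr (filter_erase_false s a p hpa),
        PermsF_congr (filter_erase_perm s a _ (by simp [hpa]))]
      have hl1 : ((s.erase a).filter p).length = sp.length :=
        (filter_erase_false s a p hpa).length_eq
      rw [hl1, List.length_erase_of_mem has]
    rw [Finset.sum_congr rfl part1, Finset.sum_congr rfl part2]
    -- pull out constants
    have pull : ∀ (C : ℝ) (F : Finset ℕ) (G : ℕ → ℝ) (B : ℝ),
        ∑ a ∈ F, C * (G a * B) = C * ((∑ a ∈ F, G a) * B) := by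
      intro C F G B
      rw [Finset.sum_mul, Finset.mul_sum]
    have pull2 : ∀ (C B : ℝ) (F : Finset ℕ) (G : ℕ → ℝ),
        ∑ a ∈ F, C * (B * G a) = C * (B * ∑ a ∈ F, G a) := by
      intro C B F G
      simp only [Finset.mul_sum]
    rw [pull, pull2]
    -- reassemble inner sums via head decomposition
    by_cases hp0 : sp = []
    · have hq0 : sq ≠ [] := by
        intro hq
        rw [hp0] at hlen; rw [hq] at hlen; simp at hlen; omega
      rw [hp0]
      simp only [List.toFinset_nil, Finset.sum_empty, zero_mul, mul_zero, zero_add]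
      rw [← sum_PermsF_head sq hq0 h]
      simp
    · by_cases hq0 : sq = []
      · rw [hq0]
        simp only [List.toFinset_nil, Finset.sum_empty, zero_mul, mul_zero, add_zero]
        rw [← sum_PermsF_head sp hp0 g]
        have hcq : sq.length = 0 := by rw [hq0]; rfl
        have hcp : sp.length = s.length := by omega
        have h1 : (s.length - 1).choose (sp.length - 1) = 1 := by
          rw [hcp]; exact Nat.choose_self _
        have h2 : (s.length).choose sp.length = 1 := by rw [hcp]; exact Nat.choose_self _
        rw [h1, h2]
      · rw [← sum_PermsF_head sq hq0 h, ← sum_PermsF_head sp hp0 g]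
        have hcp : 1 ≤ sp.length := List.length_pos_iff.mpr hp0
        have hcq : 1 ≤ sq.length := List.length_pos_iff.mpr hq0
        have pascal : ∀ L P : ℕ, 1 ≤ P → 1 ≤ L → (L : ℕ).choose P =
            (L - 1).choose (P - 1) + (L - 1).choose P := by
          intro L P h1 h2
          match L, P with
          | L + 1, P + 1 => simp [Nat.choose_succ_succ]
        rw [pascal s.length sp.length hcp hslen]
        push_cast
        ring
/-! ### The permutation sum satisfies the same recursion -/

noncomputable def Rq (x γ : ℕ → ℝ) (lo hi : ℕ) : ℝ :=
  if hi ≤ lo + 1 then 1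
  else
    ∑ k ∈ (Finset.Ioo lo hi).attach,
      qt x γ lo k.1 hi / ((hi - lo - 1 : ℕ) : ℝ) * Rq x γ lo k.1 * Rq x γ k.1 hi
termination_by hi - lo
decreasing_by
  · have := Finset.mem_Ioo.mp k.2; omega
  · have := Finset.mem_Ioo.mp k.2; omega

lemma Rq_base (x γ : ℕ → ℝ) {lo hi : ℕ} (h : hi ≤ lo + 1) : Rq x γ lo hi = 1 := by
  rw [Rq]; simp [h]

lemma Rq_step (x γ : ℕ → ℝ) {lo hi : ℕ} (h : lo + 1 < hi) :
    Rq x γ lo hi =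
      ∑ k ∈ Finset.Ioo lo hi,
        qt x γ lo k hi / ((hi - lo - 1 : ℕ) : ℝ) * Rq x γ lo k * Rq x γ k hi := by
  rw [Rq, if_neg (by omega)]
  rw [← Finset.sum_attach (Finset.Ioo lo hi)
    (fun k => qt x γ lo k hi / ((hi - lo - 1 : ℕ) : ℝ) * Rq x γ lo k * Rq x γ k hi)]

lemma perm_sum_rec (x γ : ℕ → ℝ) :
    ∀ n lo hi, hi - lo ≤ n → lo < hi →
      ∑ l ∈ PermsF (List.range' (lo + 1) (hi - lo - 1)), Hl x γ lo hi [] l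
        = ((hi - lo - 1).factorial : ℝ) * Rq x γ lo hi := by
  classical
  intro n
  induction n with
  | zero => intro lo hi h1 h2; omega
  | succ n ih =>
    intro lo hi h1 h2
    by_cases hbase : hi ≤ lo + 1
    · have h0 : hi - lo - 1 = 0 := by omega
      rw [h0, Rq_base x γ hbase]
      simp [PermsF_nil]
    · push_neg at hbase
      set N := hi - lo - 1 with hN
      have hNpos : 1 ≤ N := by omega
      set s := List.range' (lo + 1) N with hs
      have hslen : s.length = N := by rw [hs, List.length_range']
      have hsne : s ≠ [] := by
        intro h; rw [h] at hslen; simp at hslen; omega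
      rw [sum_PermsF_head s hsne]
      have hsT : s.toFinset = Finset.Ioo lo hi := by
        ext a
        rw [List.mem_toFinset, hs, List.mem_range'_1, Finset.mem_Ioo]
        omega
      rw [hsT, Rq_step x γ hbase, Finset.mul_sum]
      refine Finset.sum_congr rfl fun k hk => ?_
      obtain ⟨hk1, hk2⟩ := Finset.mem_Ioo.mp hk
      set A := List.range' (lo + 1) (k - lo - 1) with hA
      set B := List.range' (k + 1) (hi - k - 1) with hB
      have hdecomp : s = A ++ k :: B := by
        have e1 : List.range' k (hi - k) = k :: B := by
          obtain ⟨M, hM⟩ : ∃ M, hi - k - 1 = M := ⟨_, rfl⟩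
          rw [hB, hM, show hi - k = M + 1 by omega, List.range'_succ]
        have e2 : A ++ List.range' (lo + 1 + 1 * (k - lo - 1)) (hi - k) =
            List.range' (lo + 1) ((hi - k) + (k - lo - 1)) :=
          by rw [hA, List.range'_append, Nat.add_comm (k - lo - 1)]
        have h4 : lo + 1 + 1 * (k - lo - 1) = k := by omega
        have h5 : (hi - k) + (k - lo - 1) = N := by omega
        rw [h4, h5, e1] at e2
        rw [hs, ← e2]
      have hkA : k ∉ A := by
        rw [hA, List.mem_range'_1]; omega
      have herase : s.erase k = A ++ B := by
        rw [hdecomp, List.erase_append, if_neg hkA, List.erase_cons_head]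
      rw [herase]
      -- rewrite each head term via the splitting lemma
      have hterm : ∀ l' ∈ PermsF (A ++ B),
          Hl x γ lo hi [] (k :: l') =
            qt x γ lo k hi *
              (Hl x γ lo k [] (l'.filter (fun v => decide (v < k))) *
                Hl x γ k hi [] (l'.filter (fun v => !decide (v < k)))) := by
        intro l' hl'
        have hmem : ∀ v ∈ l', lo < v ∧ v < hi ∧ v ≠ k := by
          intro v hv
          have : v ∈ A ++ B := (mem_PermsF.mp hl').subset hv
          rcases List.mem_append.mp this with h | h
          · rw [hA, List.mem_range'_1] at h; omega
          · rw [hB, List.mem_range'_1] at h; omega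
        have e0 : Hl x γ lo hi [] (k :: l') =
            qt x γ lo k hi * Hl x γ lo hi ([] ++ k :: []) l' := by
          rw [Hl_cons]
          rfl
        rw [e0, Hl_split x γ lo k hi hk1 hk2 l' [] [] hmem (by simp) (by simp)]
        have hfeq : l'.filter (fun v => decide (k < v)) =
            l'.filter (fun v => !decide (v < k)) := by
          refine List.filter_congr fun v hv => ?_
          have hne := (hmem v hv).2.2
          by_cases h : v < k
          · have h' : ¬ k < v := by omega
            simp [h, h']
          · have h' : k < v := by omega
            simp [h, h']
        rw [hfeq]
      rw [Finset.sum_congr rfl hterm, ← Finset.mul_sum]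
      rw [interleave_sum (fun v => decide (v < k)) (A ++ B).length
        (Hl x γ lo k []) (Hl x γ k hi []) (A ++ B) (le_refl _)]
      have hfA : (A ++ B).filter (fun v => decide (v < k)) = A := by
        rw [List.filter_append]
        have e1 : A.filter (fun v => decide (v < k)) = A := by
          rw [List.filter_eq_self]
          intro a ha; rw [hA, List.mem_range'_1] at ha; simpa using by omega
        have e2 : B.filter (fun v => decide (v < k)) = [] := by
          rw [List.filter_eq_nil_iff]
          intro a ha; rw [hB, List.mem_range'_1] at ha; simpa using by omega
        rw [e1, e2, List.append_nil]
      have hfB : (A ++ B).filter (fun v => !decide (v < k)) = B := by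
        rw [List.filter_append]
        have e1 : A.filter (fun v => !decide (v < k)) = [] := by
          rw [List.filter_eq_nil_iff]
          intro a ha; rw [hA, List.mem_range'_1] at ha; simpa using by omega
        have e2 : B.filter (fun v => !decide (v < k)) = B := by
          rw [List.filter_eq_self]
          intro a ha; rw [hB, List.mem_range'_1] at ha; simpa using by omega
        rw [e1, e2, List.nil_append]
      rw [hfA, hfB]
      rw [ih lo k (by omega) hk1, ih k hi (by omega) hk2]
      have hlA : A.length = k - lo - 1 := by rw [hA, List.length_range']
      have hlAB : (A ++ B).length = N - 1 := by
        rw [List.length_append, hA, hB, List.length_range', List.length_range']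
        omega
      rw [hlA, hlAB]
      -- numerical identity
      have hchoose : ((N - 1).choose (k - lo - 1) * (k - lo - 1).factorial *
          (hi - k - 1).factorial : ℕ) = (N - 1).factorial := by
        have h6 : (N - 1) - (k - lo - 1) = hi - k - 1 := by omega
        rw [← h6]
        exact Nat.choose_mul_factorial_mul_factorial (by omega)
      have hfac2 : (N.factorial : ℕ) = N * (N - 1).factorial := by
        obtain ⟨M, hM⟩ : ∃ M, N = M + 1 := ⟨N - 1, by omega⟩
        rw [hM, Nat.factorial_succ]
        simp
      have hNne : ((N : ℕ) : ℝ) ≠ 0 := Nat.cast_ne_zero.mpr (by omega)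
      rw [hfac2, ← hchoose]
      push_cast
      field_simp
      rw [← hN]
      ring_nf
      rw [mul_inv_cancel_right₀ hNne]
/-! ### `Rq = Rrec` under monotonicity, and `Kstar` -/

lemma x_strict (x : ℕ → ℝ) (m : ℕ) (hxmono : ∀ j, j ≤ m → x j < x (j + 1)) :
    ∀ b a, a < b → b ≤ m + 1 → x a < x b := by
  intro b
  induction b with
  | zero => intro a h _; omega
  | succ b ihb =>
    intro a hab hb
    rcases Nat.lt_or_ge a b with h | h
    · exact lt_trans (ihb a h (by omega)) (hxmono b (by omega))
    · have : a = b := by omega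
      subst this
      exact hxmono a (by omega)

lemma qt_eq_num (x γ : ℕ → ℝ) (m lo k hi : ℕ)
    (hxmono : ∀ j, j ≤ m → x j < x (j + 1))
    (h1 : lo < k) (h2 : k < hi) (h3 : hi ≤ m + 1) :
    qt x γ lo k hi = γ k - (γ lo + (x k - x lo) / (x hi - x lo) * (γ hi - γ lo)) := by
  have d1 : x k - x lo ≠ 0 :=
    sub_ne_zero.mpr (ne_of_gt (x_strict x m hxmono k lo h1 (by omega)))
  have d2 : x hi - x k ≠ 0 :=
    sub_ne_zero.mpr (ne_of_gt (x_strict x m hxmono hi k h2 h3))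
  have d3 : x hi - x lo ≠ 0 :=
    sub_ne_zero.mpr (ne_of_gt (x_strict x m hxmono hi lo (by omega) h3))
  rw [qt]
  field_simp
  ring

lemma Rq_eq_Rrec (x γ : ℕ → ℝ) (m : ℕ) (hxmono : ∀ j, j ≤ m → x j < x (j + 1)) :
    ∀ n lo hi, hi - lo ≤ n → hi ≤ m + 1 → Rq x γ lo hi = Rrec x γ lo hi := by
  intro n
  induction n with
  | zero =>
    intro lo hi h1 h2
    have : hi ≤ lo + 1 := by omega
    rw [Rq_base x γ this, Rrec_base x γ this]
  | succ n ih =>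
    intro lo hi h1 h2
    by_cases hbase : hi ≤ lo + 1
    · rw [Rq_base x γ hbase, Rrec_base x γ hbase]
    · push_neg at hbase
      rw [Rq_step x γ hbase, Rrec_step x γ hbase]
      refine Finset.sum_congr rfl fun k hk => ?_
      obtain ⟨hk1, hk2⟩ := Finset.mem_Ioo.mp hk
      rw [ih lo k (by omega) (by omega), ih k hi (by omega) h2]
      congr 2
      rw [qt_eq_num x γ m lo k hi hxmono hk1 hk2 h2, qTri]

lemma isTriangulation_iff (m : ℕ) (T : Finset (ℕ × ℕ × ℕ)) :
    IsTriangulation m T ↔ IsTri m 0 (m + 1) T := by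
  have h1 : Finset.Icc 1 m = Finset.Ioo 0 (m + 1) := by
    ext j; simp only [Finset.mem_Icc, Finset.mem_Ioo]; omega
  constructor
  · rintro ⟨hc, hb, hn, hi⟩
    exact ⟨by omega, fun t ht => ⟨Nat.zero_le _, (hb t ht).1, (hb t ht).2.1, (hb t ht).2.2⟩,
      hn, by rw [hi, h1]⟩
  · rintro ⟨hc, hb, hn, hi⟩
    exact ⟨by omega, fun t ht => ⟨(hb t ht).2.1, (hb t ht).2.2.1, (hb t ht).2.2.2⟩,
      hn, by rw [hi, h1]⟩

lemma Kstar_eq_tsum (m : ℕ) (x γ : ℕ → ℝ) :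
    Kstar m x γ = ∑ T ∈ Tset m 0 (m + 1), ∏ t ∈ T, qTri x γ t := by
  classical
  rw [Kstar, Tset, Finset.sum_filter]
  refine Finset.sum_congr rfl fun T _ => ?_
  by_cases h : IsTriangulation m T
  · rw [if_pos h, if_pos ((isTriangulation_iff m T).mp h)]
  · rw [if_neg h, if_neg (fun h' => h ((isTriangulation_iff m T).mpr h'))]
/-! ### Linking `qTilde` to `Hl` -/

lemma foldr_max_eq_finset (s : List ℕ) :
    s.foldr max 0 = (s.toFinset.max).unbotD 0 := by
  classical
  induction s with
  | nil => simp
  | cons a s ih =>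
    simp only [List.foldr_cons, List.toFinset_cons, Finset.max_insert, ih]
    induction (s.toFinset.max) using WithBot.recBotCoe with
    | bot =>
      rw [WithBot.unbotD_bot, sup_bot_eq, WithBot.unbotD_coe]
      exact max_eq_left (Nat.zero_le a)
    | coe b =>
      rw [WithBot.unbotD_coe, ← WithBot.coe_sup, WithBot.unbotD_coe]

lemma foldr_min_eq_finset (s : List ℕ) (hi : ℕ) (h : ∀ a ∈ s, a ≤ hi) :
    s.foldr min hi = (s.toFinset.min).untopD hi := by
  classical
  induction s with
  | nil => simp
  | cons a s ih =>
    simp only [List.foldr_cons, List.toFinset_cons, Finset.min_insert,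
      ih (fun b hb => h b (List.mem_cons_of_mem _ hb))]
    induction (s.toFinset.min) using WithTop.recTopCoe with
    | top =>
      rw [WithTop.untopD_top, inf_top_eq, WithTop.untopD_coe]
      exact min_eq_left (h a (List.mem_cons_self))
    | coe b =>
      rw [WithTop.untopD_coe, ← WithTop.coe_inf, WithTop.untopD_coe]

lemma prod_factors_eq_Hl (x γ : ℕ → ℝ) (lo hi : ℕ) :
    ∀ (l : List ℕ) (seen : List ℕ),
      (∏ j : Fin l.length,
        qt x γ (Lof lo (seen ++ l.take (j : ℕ)) (l.get j)) (l.get j)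
          (Rof hi (seen ++ l.take (j : ℕ)) (l.get j)))
      = Hl x γ lo hi seen l := by
  intro l
  induction l with
  | nil => intro seen; simp
  | cons k l ihl =>
    intro seen
    simp only [List.length_cons]
    rw [Fin.prod_univ_succ, Hl_cons]
    congr 1
    · simp
    · rw [← ihl (seen ++ [k])]
      refine Finset.prod_congr rfl fun i _ => ?_
      have e1 : ((i.succ : Fin (l.length + 1)) : ℕ) = (i : ℕ) + 1 := rfl
      have e2 : (k :: l).take ((i : ℕ) + 1) = k :: l.take (i : ℕ) := List.take_succ_cons
      have e3 : (k :: l).get i.succ = l.get i := by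
        rcases i with ⟨iv, hiv⟩
        exact List.get_cons_succ
      have e4 : seen ++ (k :: l.take (i : ℕ)) = (seen ++ [k]) ++ l.take (i : ℕ) := by simp
      rw [e1, e2, e3, e4]

lemma mem_take_ofFn (m : ℕ) (g : Fin m → ℕ) (jn : ℕ) (a : ℕ) :
    a ∈ (List.ofFn g).take jn ↔ ∃ i : Fin m, (i : ℕ) < jn ∧ g i = a := by
  constructor
  · intro h
    obtain ⟨i, hm', hget⟩ := List.mem_take_iff_getElem.mp h
    rw [List.getElem_ofFn] at hget
    simp only [List.length_ofFn, lt_inf_iff] at hm'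
    exact ⟨⟨i, hm'.2⟩, hm'.1, hget⟩
  · rintro ⟨i, hij, rfl⟩
    apply List.mem_take_iff_getElem.mpr
    refine ⟨(i : ℕ), ?_, ?_⟩
    · simp only [List.length_ofFn, lt_inf_iff]
      exact ⟨hij, i.isLt⟩
    · rw [List.getElem_ofFn]

lemma Lind_eq_Lof (m : ℕ) (σ : Equiv.Perm (Fin m)) (j : Fin m) :
    Lind m σ j =
      Lof 0 ((List.ofFn (fun i => (σ i : ℕ) + 1)).take (j : ℕ)) ((σ j : ℕ) + 1) := by
  classical
  rw [Lind, Lof, foldr_max_eq_finset]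
  congr 2
  ext a
  simp only [Finset.mem_image, Finset.mem_filter, Finset.mem_univ, true_and,
    List.mem_toFinset, List.mem_filter, decide_eq_true_eq, mem_take_ofFn]
  constructor
  · rintro ⟨i, ⟨hij, hlt⟩, rfl⟩
    refine ⟨⟨i, Fin.lt_def.mp hij, rfl⟩, ?_⟩
    have h2 := Fin.lt_def.mp hlt
    show (σ i : ℕ) + 1 < (σ j : ℕ) + 1
    omega
  · rintro ⟨⟨i, hij, rfl⟩, hlt⟩
    have h2 : (σ i : ℕ) + 1 < (σ j : ℕ) + 1 := hlt
    exact ⟨i, ⟨Fin.lt_def.mpr hij, Fin.lt_def.mpr (by omega)⟩, rfl⟩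

lemma Rind_eq_Rof (m : ℕ) (σ : Equiv.Perm (Fin m)) (j : Fin m) :
    Rind m σ j =
      Rof (m + 1) ((List.ofFn (fun i => (σ i : ℕ) + 1)).take (j : ℕ)) ((σ j : ℕ) + 1) := by
  classical
  rw [Rind, Rof, foldr_min_eq_finset]
  · congr 2
    ext a
    simp only [Finset.mem_image, Finset.mem_filter, Finset.mem_univ, true_and,
      List.mem_toFinset, List.mem_filter, decide_eq_true_eq, mem_take_ofFn]
    constructor
    · rintro ⟨i, ⟨hij, hlt⟩, rfl⟩
      refine ⟨⟨i, Fin.lt_def.mp hij, rfl⟩, ?_⟩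
      have h2 := Fin.lt_def.mp hlt
      show (σ j : ℕ) + 1 < (σ i : ℕ) + 1
      omega
    · rintro ⟨⟨i, hij, rfl⟩, hlt⟩
      have h2 : (σ j : ℕ) + 1 < (σ i : ℕ) + 1 := hlt
      exact ⟨i, ⟨Fin.lt_def.mpr hij, Fin.lt_def.mpr (by omega)⟩, rfl⟩
  · intro a ha
    have h1 := List.mem_of_mem_filter ha
    obtain ⟨i, _, rfl⟩ := (mem_take_ofFn m _ _ a).mp h1
    have := (σ i).isLt
    omega

lemma prod_qTilde_eq (m : ℕ) (x γ : ℕ → ℝ) (σ : Equiv.Perm (Fin m)) :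
    (∏ j : Fin m, qTilde m x γ σ j)
      = Hl x γ 0 (m + 1) [] (List.ofFn (fun i => (σ i : ℕ) + 1)) := by
  rw [← prod_factors_eq_Hl x γ 0 (m + 1) (List.ofFn (fun i => (σ i : ℕ) + 1)) []]
  have hlen : (List.ofFn (fun i => (σ i : ℕ) + 1)).length = m := List.length_ofFn
  rw [← Equiv.prod_comp (finCongr hlen.symm)
    (fun j => qt x γ
      (Lof 0 ([] ++ (List.ofFn (fun i => (σ i : ℕ) + 1)).take (j : ℕ))
        ((List.ofFn (fun i => (σ i : ℕ) + 1)).get j))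
      ((List.ofFn (fun i => (σ i : ℕ) + 1)).get j)
      (Rof (m + 1) ([] ++ (List.ofFn (fun i => (σ i : ℕ) + 1)).take (j : ℕ))
        ((List.ofFn (fun i => (σ i : ℕ) + 1)).get j)))]
  refine Finset.prod_congr rfl fun j _ => ?_
  show qt x γ (Lind m σ j) ((σ j : ℕ) + 1) (Rind m σ j) = _
  have hget : (List.ofFn (fun i => (σ i : ℕ) + 1)).get (Fin.cast hlen.symm j)
      = (σ j : ℕ) + 1 := by
    rw [List.get_ofFn]
    congr 1
    try exact Fin.ext (by simp)
  rw [Lind_eq_Lof, Rind_eq_Rof]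
  simp only [List.nil_append, hget, finCongr_apply, Fin.coe_cast]

lemma sum_perm_eq_sum_lists (m : ℕ) (f : List ℕ → ℝ) :
    ∑ σ : Equiv.Perm (Fin m), f (List.ofFn (fun i => (σ i : ℕ) + 1)) =
      ∑ l ∈ PermsF (List.range' 1 m), f l := by
  classical
  refine Finset.sum_bij (fun σ _ => List.ofFn (fun i => ((σ : Equiv.Perm (Fin m)) i : ℕ) + 1))
    ?_ ?_ ?_ ?_
  · intro σ _
    rw [mem_PermsF]
    have h1 : (List.ofFn (fun i => (σ i : ℕ) + 1)).Nodup := by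
      rw [List.nodup_ofFn]
      intro i j h
      have h' : (σ i : ℕ) + 1 = (σ j : ℕ) + 1 := h
      exact σ.injective (Fin.ext (by omega))
    have h2 : (List.range' 1 m).Nodup := List.nodup_range'
    have h3 : (List.ofFn (fun i => (σ i : ℕ) + 1)).toFinset = (List.range' 1 m).toFinset := by
      ext a
      simp only [List.mem_toFinset, List.mem_ofFn, Set.mem_range, List.mem_range'_1]
      constructor
      · rintro ⟨i, rfl⟩
        have := (σ i).isLt
        show 1 ≤ (σ i : ℕ) + 1 ∧ (σ i : ℕ) + 1 < 1 + m
        omega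
      · rintro ⟨h1a, h2a⟩
        refine ⟨σ.symm ⟨a - 1, by omega⟩, ?_⟩
        show (σ (σ.symm ⟨a - 1, by omega⟩) : ℕ) + 1 = a
        rw [Equiv.apply_symm_apply]
        show a - 1 + 1 = a
        omega
    have := List.toFinset_eq_iff_perm_dedup.mp h3
    rwa [h1.dedup, h2.dedup] at this
  · intro σ _ σ' _ heq
    rw [List.ofFn_inj] at heq
    refine Equiv.ext fun i => Fin.ext ?_
    have h2 : (σ i : ℕ) + 1 = (σ' i : ℕ) + 1 := congrFun heq i
    omega
  · intro l hl
    have hperm := mem_PermsF.mp hl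
    have hlen : l.length = m := by rw [hperm.length_eq, List.length_range']
    have hnodup : l.Nodup := hperm.nodup_iff.mpr (List.nodup_range')
    have helem : ∀ a ∈ l, 1 ≤ a ∧ a < 1 + m := by
      intro a ha
      have := hperm.subset ha
      rwa [List.mem_range'_1] at this
    have hgetmem : ∀ (i : ℕ) (h : i < l.length), l.get ⟨i, h⟩ ∈ l :=
      fun i h => List.get_mem l ⟨i, h⟩
    let g : Fin m → Fin m := fun i =>
      ⟨l.get ⟨(i : ℕ), by omega⟩ - 1, by
        have := helem _ (hgetmem (i : ℕ) (by omega))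
        omega⟩
    have hginj : Function.Injective g := by
      intro i i' h
      have h1 := helem _ (hgetmem (i : ℕ) (by omega))
      have h1' := helem _ (hgetmem (i' : ℕ) (by omega))
      have hv : (g i : ℕ) = (g i' : ℕ) := by rw [h]
      simp only [g] at hv
      have hgeq : l.get ⟨(i : ℕ), by omega⟩ = l.get ⟨(i' : ℕ), by omega⟩ := by omega
      have := List.nodup_iff_injective_get.mp hnodup hgeq
      exact Fin.ext (by
        have := congrArg Fin.val this
        simpa using this)
    let σ : Equiv.Perm (Fin m) := Equiv.ofBijective g (Finite.injective_iff_bijective.mp hginj)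
    refine ⟨σ, Finset.mem_univ _, ?_⟩
    refine List.ext_get (by simp [hlen]) ?_
    intro n h1 h2
    rw [List.get_ofFn]
    show (σ _ : ℕ) + 1 = _
    have : (σ (Fin.cast (by simp) ⟨n, h1⟩) : ℕ) = l.get ⟨n, h2⟩ - 1 := rfl
    rw [this]
    have := helem _ (hgetmem n h2)
    omega
  · intro σ _; rfl

/-- Representation of `K*` as a sum over the permutations of `{1, …, m}` :
`K*(x[m+2], γ[m+2]) = (1/m!) Σ_σ ∏_{j=1}^m q̃_{σ,j}`. -/
theorem Kstar_eq_perm_sum (m : ℕ) (hm : 1 ≤ m) (x γ : ℕ → ℝ)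
    (hx0 : x 0 = 0) (hx1 : x (m + 1) = 1) (hxmono : ∀ j, j ≤ m → x j < x (j + 1)) :
    Kstar m x γ =
      ((Nat.factorial m : ℝ))⁻¹ *
        ∑ σ : Equiv.Perm (Fin m), ∏ j : Fin m, qTilde m x γ σ j := by
  have hK : Kstar m x γ = Rrec x γ 0 (m + 1) := by
    rw [Kstar_eq_tsum]
    exact tset_sum x γ m (m + 1) 0 (m + 1) (by omega) (by omega) (le_refl _)
  have hP : (∑ σ : Equiv.Perm (Fin m), ∏ j : Fin m, qTilde m x γ σ j)
      = (m.factorial : ℝ) * Rrec x γ 0 (m + 1) := by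
    rw [Finset.sum_congr rfl (fun σ _ => prod_qTilde_eq m x γ σ)]
    rw [sum_perm_eq_sum_lists m (Hl x γ 0 (m + 1) [])]
    have e2 := perm_sum_rec x γ (m + 1) 0 (m + 1) (by omega) (by omega)
    have e3 : m + 1 - 0 - 1 = m := by omega
    rw [e3] at e2
    rw [show (0 : ℕ) + 1 = 1 from rfl] at e2
    rw [e2]
    rw [Rq_eq_Rrec x γ m hxmono (m + 1) 0 (m + 1) (by omega) (le_refl _)]
  rw [hK, hP, ← mul_assoc,
    inv_mul_cancel₀ (by exact_mod_cast Nat.factorial_ne_zero m), one_mul]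

end
end
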